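/- arXiv:1605.00174 — 9 statements merged into one kernel-verified Lean document; each statement's English description precedes it below -/
import Mathlib

section
/- Every subspace of K⟨G⟩, where (G,<) is a well-ordered set, admits a unique reduced basis. -/
/-- `g` is the leading generator of `v`: it lies in the support of `v` and
dominates every element of the support. -/
def IsLeadingGen {K G : Type*} [Field K] [LinearOrder G]
    (v : G →₀ K) (g : G) : Prop :=
  g ∈ v.support ∧ ∀ g' ∈ v.support, g' ≤ g

/-- `B` is a reduced basis of the subspace `V` of `K⟨G⟩`: a basis of `V` whose
elements have leading coefficient `1` and such that the leading generator of an
element does not occur in the support of any other element. -/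
def IsReducedBasis {K G : Type*} [Field K] [LinearOrder G]
    (V : Submodule K (G →₀ K)) (B : Set (G →₀ K)) : Prop :=
  (B ⊆ (V : Set (G →₀ K))) ∧
  LinearIndependent K (fun e : B => (e : G →₀ K)) ∧
  Submodule.span K B = V ∧
  (∀ e ∈ B, ∃ g : G, IsLeadingGen e g ∧ e g = 1) ∧
  (∀ e ∈ B, ∀ e' ∈ B, e ≠ e' → ∀ g : G, IsLeadingGen e' g → e g = 0)

section Aux

variable {K G : Type*} [Field K] [LinearOrder G]

lemma IsLeadingGen.unique {v : G →₀ K} {g g' : G} (h : IsLeadingGen v g)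
    (h' : IsLeadingGen v g') : g = g' :=
  le_antisymm (h'.2 g h.1) (h.2 g' h'.1)

lemma exists_isLeadingGen {v : G →₀ K} (hv : v ≠ 0) : ∃ g, IsLeadingGen v g := by
  have hne : v.support.Nonempty := Finsupp.support_nonempty_iff.mpr hv
  exact ⟨v.support.max' hne, v.support.max'_mem hne,
    fun g' hg' => v.support.le_max' g' hg'⟩

/-- The set of leading generators of nonzero elements of `V`. -/
def Lset (V : Submodule K (G →₀ K)) : Set G :=
  {g | ∃ v ∈ V, v ≠ 0 ∧ IsLeadingGen v g}

/-- Projection onto the coordinates in `Lset V`. -/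
noncomputable def pmap (V : Submodule K (G →₀ K)) : (G →₀ K) →ₗ[K] (G →₀ K) where
  toFun v := @Finsupp.filter G K _ (· ∈ Lset V) (fun _ => Classical.propDecidable _) v
  map_add' x y := by
    classical
    ext g
    by_cases hg : g ∈ Lset V <;> simp [Finsupp.filter_apply, hg]
  map_smul' c x := by
    classical
    ext g
    by_cases hg : g ∈ Lset V <;> simp [Finsupp.filter_apply, hg]

lemma pmap_apply_of_mem {V : Submodule K (G →₀ K)} {g : G} (hg : g ∈ Lset V)
    (v : G →₀ K) : pmap V v g = v g := by
  letI : DecidablePred (· ∈ Lset V) := fun _ => Classical.propDecidable _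
  show (Finsupp.filter _ v) g = v g
  rw [Finsupp.filter_apply, if_pos hg]

lemma pmap_apply_of_not_mem {V : Submodule K (G →₀ K)} {g : G} (hg : g ∉ Lset V)
    (v : G →₀ K) : pmap V v g = 0 := by
  letI : DecidablePred (· ∈ Lset V) := fun _ => Classical.propDecidable _
  show (Finsupp.filter _ v) g = 0
  rw [Finsupp.filter_apply, if_neg hg]

lemma eq_zero_of_pmap_eq_zero {V : Submodule K (G →₀ K)} {v : G →₀ K}
    (hv : v ∈ V) (h : pmap V v = 0) : v = 0 := by
  by_contra h0
  obtain ⟨g, hg⟩ := exists_isLeadingGen h0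
  have hgL : g ∈ Lset V := ⟨v, hv, h0, hg⟩
  have h1 : v g ≠ 0 := Finsupp.mem_support_iff.mp hg.1
  have := pmap_apply_of_mem hgL v
  rw [h] at this
  exact h1 (by simpa using this.symm)

lemma pmap_injOn {V : Submodule K (G →₀ K)} {v₁ v₂ : G →₀ K}
    (h₁ : v₁ ∈ V) (h₂ : v₂ ∈ V) (h : pmap V v₁ = pmap V v₂) : v₁ = v₂ := by
  have : v₁ - v₂ = 0 := by
    refine eq_zero_of_pmap_eq_zero (V.sub_mem h₁ h₂) ?_
    rw [map_sub, h, sub_self]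
  exact sub_eq_zero.mp this

lemma exists_pmap_single (V : Submodule K (G →₀ K)) [WellFoundedLT G] :
    ∀ g ∈ Lset V, ∃ v ∈ V, pmap V v = Finsupp.single g 1 := by
  intro g
  induction g using WellFoundedLT.induction with
  | _ g IH =>
  intro hgL
  obtain ⟨w, hwV, hw0, hwlg⟩ := hgL
  have hgL : g ∈ Lset V := ⟨w, hwV, hw0, hwlg⟩
  have hc : w g ≠ 0 := Finsupp.mem_support_iff.mp hwlg.1
  set u : G →₀ K := (w g)⁻¹ • w with hu
  have huV : u ∈ V := V.smul_mem _ hwV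
  have hug : u g = 1 := by
    rw [hu, Finsupp.smul_apply, smul_eq_mul, inv_mul_cancel₀ hc]
  have husupp : ∀ h ∈ u.support, h ≤ g := by
    intro h hh
    apply hwlg.2
    have : u h ≠ 0 := Finsupp.mem_support_iff.mp hh
    rw [hu, Finsupp.smul_apply, smul_eq_mul] at this
    exact Finsupp.mem_support_iff.mpr (right_ne_zero_of_mul this)
  set r : G →₀ K := pmap V u - Finsupp.single g 1 with hr
  have hrsupp : ∀ h ∈ r.support, h < g ∧ h ∈ Lset V := by
    intro h hh
    have hrh : r h ≠ 0 := Finsupp.mem_support_iff.mp hh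
    have hhg : h ≠ g := by
      intro hhg
      apply hrh
      rw [hr, hhg, Finsupp.sub_apply, pmap_apply_of_mem hgL, hug,
        Finsupp.single_eq_same, sub_self]
    have hrh' : r h = pmap V u h := by
      rw [hr, Finsupp.sub_apply, Finsupp.single_eq_of_ne' (Ne.symm hhg), sub_zero]
    have hhL : h ∈ Lset V := by
      by_contra hL
      exact hrh (by rw [hrh', pmap_apply_of_not_mem hL])
    have huh : u h ≠ 0 := by
      intro h0
      exact hrh (by rw [hrh', pmap_apply_of_mem hhL, h0])
    exact ⟨lt_of_le_of_ne (husupp h (Finsupp.mem_support_iff.mpr huh)) hhg, hhL⟩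
  choose! f hf1 hf2 using fun h (hlt : h < g) (hL : h ∈ Lset V) => IH h hlt hL
  refine ⟨u - ∑ h ∈ r.support, r h • f h, ?_, ?_⟩
  · exact V.sub_mem huV (Submodule.sum_mem V fun h hh =>
      V.smul_mem _ (hf1 h (hrsupp h hh).1 (hrsupp h hh).2))
  · rw [map_sub, map_sum]
    have : ∀ h ∈ r.support, pmap V (r h • f h) = Finsupp.single h (r h) := by
      intro h hh
      rw [map_smul, hf2 h (hrsupp h hh).1 (hrsupp h hh).2, Finsupp.smul_single',
        mul_one]
    rw [Finset.sum_congr rfl this]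
    have hsum : ∑ h ∈ r.support, Finsupp.single h (r h) = r := Finsupp.sum_single r
    rw [hsum, hr, sub_sub_cancel]

/-- The canonical reduced basis. -/
def Bset (V : Submodule K (G →₀ K)) : Set (G →₀ K) :=
  {v | v ∈ V ∧ ∃ g : G, pmap V v = Finsupp.single g 1}

lemma Bset_spec {V : Submodule K (G →₀ K)} {v : G →₀ K} (hv : v ∈ Bset V) :
    ∃ g : G, pmap V v = Finsupp.single g 1 ∧ g ∈ Lset V ∧ IsLeadingGen v g ∧ v g = 1 := by
  obtain ⟨hvV, g, hg⟩ := hv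
  have hgL : g ∈ Lset V := by
    by_contra hL
    have := pmap_apply_of_not_mem hL v
    rw [hg, Finsupp.single_eq_same] at this
    exact one_ne_zero this
  have hvg : v g = 1 := by
    have := pmap_apply_of_mem hgL v
    rw [hg, Finsupp.single_eq_same] at this
    exact this.symm
  have hv0 : v ≠ 0 := by
    intro h0
    rw [h0] at hvg
    simp at hvg
  obtain ⟨g₀, hg₀⟩ := exists_isLeadingGen hv0
  have hg₀L : g₀ ∈ Lset V := ⟨v, hvV, hv0, hg₀⟩
  have hg₀g : g₀ = g := by
    have h1 : pmap V v g₀ = v g₀ := pmap_apply_of_mem hg₀L v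
    have h2 : v g₀ ≠ 0 := Finsupp.mem_support_iff.mp hg₀.1
    rw [hg] at h1
    by_contra hne
    rw [Finsupp.single_eq_of_ne' (Ne.symm hne)] at h1
    exact h2 h1.symm
  exact ⟨g, hg, hgL, hg₀g ▸ hg₀, hvg⟩

lemma isReducedBasis_Bset (V : Submodule K (G →₀ K)) [WellFoundedLT G] :
    IsReducedBasis V (Bset V) := by
  have hsub : Bset V ⊆ (V : Set (G →₀ K)) := fun v hv => hv.1
  choose w hw1 hw2 hw3 hw4 using fun e : Bset V => Bset_spec e.2
  have winj : Function.Injective w := by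
    intro e e' h
    have : pmap V (e : G →₀ K) = pmap V (e' : G →₀ K) := by rw [hw1, hw1, h]
    exact Subtype.ext (pmap_injOn e.2.1 e'.2.1 this)
  refine ⟨hsub, ?_, ?_, ?_, ?_⟩
  · -- linear independence
    apply LinearIndependent.of_comp (pmap V)
    have : (⇑(pmap V) ∘ fun e : Bset V => (e : G →₀ K)) =
        (fun g : G => Finsupp.single g (1 : K)) ∘ w := by
      funext e; exact hw1 e
    rw [this]
    have hb : LinearIndependent K (fun g : G => Finsupp.single g (1 : K)) := by
      have := (Finsupp.basisSingleOne (R := K) (ι := G)).linearIndependent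
      simpa using this
    exact hb.comp w winj
  · -- span
    refine le_antisymm (Submodule.span_le.mpr hsub) ?_
    intro v hv
    have hmem : ∀ h ∈ (pmap V v).support, h ∈ Lset V := by
      intro h hh
      by_contra hL
      exact Finsupp.mem_support_iff.mp hh (pmap_apply_of_not_mem hL v)
    choose f hf1 hf2 using fun h (hL : h ∈ Lset V) => exists_pmap_single V h hL
    set s := (pmap V v).support with hs
    set v' : G →₀ K := ∑ h ∈ s.attach, (pmap V v h.1) • f h.1 (hmem h.1 h.2) with hv'
    have hv'V : v' ∈ V := Submodule.sum_mem V fun h _ => V.smul_mem _ (hf1 _ _)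
    have hv'span : v' ∈ Submodule.span K (Bset V) := by
      refine Submodule.sum_mem _ fun h _ => Submodule.smul_mem _ _ ?_
      exact Submodule.subset_span ⟨hf1 _ _, h.1, hf2 _ _⟩
    have hpv' : pmap V v' = pmap V v := by
      rw [hv', map_sum]
      have h1 : ∀ h ∈ s.attach, pmap V ((pmap V v h.1) • f h.1 (hmem h.1 h.2)) =
          Finsupp.single h.1 (pmap V v h.1) := by
        intro h _
        rw [map_smul, hf2, Finsupp.smul_single', mul_one]
      rw [Finset.sum_congr rfl h1,
        Finset.sum_attach s (fun h => Finsupp.single h (pmap V v h))]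
      exact Finsupp.sum_single (pmap V v)
    have : v = v' := pmap_injOn hv hv'V hpv'.symm
    rw [this]
    exact hv'span
  · -- leading coeff 1
    intro e he
    exact ⟨w ⟨e, he⟩, hw3 ⟨e, he⟩, hw4 ⟨e, he⟩⟩
  · -- disjoint supports
    intro e he e' he' hne g hg
    have hge' : g = w ⟨e', he'⟩ := hg.unique (hw3 ⟨e', he'⟩)
    have hgne : g ≠ w ⟨e, he⟩ := by
      intro hgg
      apply hne
      exact pmap_injOn he.1 he'.1 (by rw [hw1 ⟨e, he⟩, hw1 ⟨e', he'⟩, ← hgg, hge'])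
    have hgL : g ∈ Lset V := hge' ▸ hw2 ⟨e', he'⟩
    have := pmap_apply_of_mem hgL e
    rw [hw1 ⟨e, he⟩, Finsupp.single_eq_of_ne' (Ne.symm hgne)] at this
    exact this.symm

lemma reducedBasis_leadingGen_exists {V : Submodule K (G →₀ K)} {B : Set (G →₀ K)}
    (hB : IsReducedBasis V B) : ∀ g ∈ Lset V, ∃ e ∈ B, IsLeadingGen e g := by
  classical
  intro g hg
  obtain ⟨v, hvV, hv0, hvg⟩ := hg
  rw [← hB.2.2.1] at hvV
  obtain ⟨c, hcs, hcv⟩ := Submodule.mem_span_set.mp hvV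
  choose lgf hlgf1 hlgf2 using hB.2.2.2.1
  have hT : c.support.Nonempty := by
    rcases Finset.eq_empty_or_nonempty c.support with h | h
    · exfalso
      apply hv0
      rw [← hcv, Finsupp.sum, h]
      simp
    · exact h
  set I : Finset G := c.support.attach.image (fun e => lgf e.1 (hcs e.2)) with hI
  have himg : I.Nonempty := by
    rw [hI]
    exact Finset.image_nonempty.mpr (Finset.attach_nonempty_iff.mpr hT)
  set m := I.max' himg with hm
  obtain ⟨e₀, he₀A, he₀⟩ := Finset.mem_image.mp (I.max'_mem himg)
  have he₀T : (e₀ : G →₀ K) ∈ c.support := e₀.2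
  have he₀B : (e₀ : G →₀ K) ∈ B := hcs he₀T
  have hlg₀ : IsLeadingGen (e₀ : G →₀ K) m := by
    rw [hm, ← he₀]
    exact hlgf1 e₀.1 he₀B
  have hvapp : ∀ h : G, v h = ∑ e ∈ c.support, c e * e h := by
    intro h
    rw [← hcv, Finsupp.sum, Finset.sum_apply']
    simp
  have hvm : v m = c e₀ := by
    rw [hvapp, Finset.sum_eq_single (e₀ : G →₀ K)]
    · rw [hm, ← he₀, hlgf2 e₀.1 he₀B, mul_one]
    · intro e heT hne
      rw [hB.2.2.2.2 e (hcs heT) e₀ he₀B hne m hlg₀, mul_zero]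
    · intro h
      exact absurd he₀T h
  have hcne : c e₀ ≠ 0 := Finsupp.mem_support_iff.mp he₀T
  have hlgv : IsLeadingGen v m := by
    constructor
    · exact Finsupp.mem_support_iff.mpr (hvm ▸ hcne)
    · intro h hh
      by_contra hmh
      push_neg at hmh
      refine Finsupp.mem_support_iff.mp hh ?_
      rw [hvapp]
      refine Finset.sum_eq_zero fun e heT => ?_
      have hmem : lgf e (hcs heT) ∈ I := by
        rw [hI]
        exact Finset.mem_image_of_mem _ (Finset.mem_attach _ ⟨e, heT⟩)
      have hle : lgf e (hcs heT) ≤ m := Finset.le_max' I _ hmem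
      have : e h = 0 := by
        by_contra h0
        have := (hlgf1 e (hcs heT)).2 h (Finsupp.mem_support_iff.mpr h0)
        exact absurd (this.trans hle) (not_le.mpr hmh)
      rw [this, mul_zero]
  exact ⟨e₀, he₀B, (hvg.unique hlgv) ▸ hlg₀⟩

lemma reducedBasis_pmap {V : Submodule K (G →₀ K)} {B : Set (G →₀ K)}
    (hB : IsReducedBasis V B) {e : G →₀ K} (he : e ∈ B) {g : G}
    (hg : IsLeadingGen e g) : pmap V e = Finsupp.single g 1 := by
  have he0 : e ≠ 0 := by
    intro h
    rw [h] at hg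
    simp [IsLeadingGen] at hg
  have hgL : g ∈ Lset V := ⟨e, hB.1 he, he0, hg⟩
  have heg1 : e g = 1 := by
    obtain ⟨g', hg', hg'1⟩ := hB.2.2.2.1 e he
    rw [hg.unique hg']
    exact hg'1
  ext h
  by_cases hhL : h ∈ Lset V
  · rw [pmap_apply_of_mem hhL]
    by_cases hhg : h = g
    · subst hhg
      rw [Finsupp.single_eq_same, heg1]
    · rw [Finsupp.single_eq_of_ne' (Ne.symm hhg)]
      obtain ⟨e', he'B, he'lg⟩ := reducedBasis_leadingGen_exists hB h hhL
      have hne : e ≠ e' := by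
        intro hee
        subst hee
        exact hhg (he'lg.unique hg)
      exact hB.2.2.2.2 e he e' he'B hne h he'lg
  · rw [pmap_apply_of_not_mem hhL]
    have hhg : h ≠ g := fun hhg => hhL (hhg ▸ hgL)
    rw [Finsupp.single_eq_of_ne' (Ne.symm hhg)]

end Aux

/-- Every subspace of `K⟨G⟩`, for `(G,<)` a well-ordered set, admits a unique
reduced basis. -/
theorem exists_unique_reducedBasis {K G : Type*} [Field K] [LinearOrder G]
    [WellFoundedLT G] (V : Submodule K (G →₀ K)) :
    ∃! B : Set (G →₀ K), IsReducedBasis V B := by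
  refine ⟨Bset V, isReducedBasis_Bset V, ?_⟩
  intro B' hB'
  ext e
  constructor
  · intro he
    obtain ⟨g, hg, _⟩ := hB'.2.2.2.1 e he
    exact ⟨hB'.1 he, g, reducedBasis_pmap hB' he hg⟩
  · intro he
    obtain ⟨g, hpe, hgL, _, _⟩ := Bset_spec he
    obtain ⟨e', he'B, he'lg⟩ := reducedBasis_leadingGen_exists hB' g hgL
    have hpe' : pmap V e' = Finsupp.single g 1 := reducedBasis_pmap hB' he'B he'lg
    have : e = e' := pmap_injOn he.1 (hB'.1 he'B) (by rw [hpe, hpe'])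
    rw [this]
    exact he'B
end

section
/- For every subspace V of K⟨G⟩, with (G,<) a well-ordered set, there exists a unique reduction operator T relative to (G,<) with kernel V. Moreover, the set of generators not fixed by T equals the set of leading generators of the reduced basis of V. -/
/-- `T` is a reduction operator relative to `(G,<)`. -/
def IsRedOp {K G : Type*} [Field K] [LinearOrder G]
    (T : Module.End K (G →₀ K)) : Prop :=
  T ∘ₗ T = T ∧ ∀ g : G, T (Finsupp.single g 1) = Finsupp.single g 1 ∨
    ∀ g' ∈ (T (Finsupp.single g 1)).support, g' < g

namespace RedOpAux

open Finsupp

variable {K G : Type*} [Field K] [LinearOrder G]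

lemma isLeadingGen_unique {v : G →₀ K} {g g' : G}
    (h : IsLeadingGen v g) (h' : IsLeadingGen v g') : g = g' :=
  le_antisymm (h'.2 g h.1) (h.2 g' h'.1)

lemma exists_isLeadingGen {v : G →₀ K} (hv : v ≠ 0) : ∃ g, IsLeadingGen v g := by
  have hne : v.support.Nonempty := Finsupp.support_nonempty_iff.mpr hv
  exact ⟨v.support.max' hne, v.support.max'_mem hne,
    fun g' hg' => v.support.le_max' g' hg'⟩

variable (V : Submodule K (G →₀ K))

/-- The set of leading generators of elements of `V`. -/
def L : Set G := {g | ∃ v ∈ V, IsLeadingGen v g}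

/-- The subspace of elements supported away from `L V`. -/
def W : Submodule K (G →₀ K) where
  carrier := {v | ∀ g ∈ L V, v g = 0}
  add_mem' := by
    intro a b ha hb g hg
    simp [ha g hg, hb g hg]
  zero_mem' := by intro g _; simp
  smul_mem' := by
    intro c a ha g hg
    simp [ha g hg]

lemma mem_W_iff {v : G →₀ K} : v ∈ W V ↔ ∀ g ∈ L V, v g = 0 := Iff.rfl

lemma disjoint_V_W : Disjoint V (W V) := by
  rw [Submodule.disjoint_def]
  intro v hvV hvW
  by_contra hv0
  obtain ⟨g, hg⟩ := exists_isLeadingGen hv0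
  have hgL : g ∈ L V := ⟨v, hvV, hg⟩
  have := (mem_W_iff V).mp hvW g hgL
  exact (Finsupp.mem_support_iff.mp hg.1) this

lemma sub_step {g : G} (hg : g ∈ L V) (x : G →₀ K) :
    ∃ y : G →₀ K, x - y ∈ V ∧ y g = 0 ∧ ∀ h ∈ y.support, h ∈ x.support ∨ h < g := by
  obtain ⟨v, hvV, hvg⟩ := hg
  have hvg0 : v g ≠ 0 := Finsupp.mem_support_iff.mp hvg.1
  have hyg : (x - (x g / v g) • v) g = 0 := by
    simp only [Finsupp.sub_apply, Finsupp.smul_apply, smul_eq_mul]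
    field_simp
    simp
  refine ⟨x - (x g / v g) • v, ?_, hyg, ?_⟩
  · have : x - (x - (x g / v g) • v) = (x g / v g) • v := by abel
    rw [this]
    exact Submodule.smul_mem V _ hvV
  · intro h hh
    rcases Finset.mem_union.mp (Finsupp.support_sub hh) with h1 | h1
    · exact Or.inl h1
    · have hle : h ≤ g := hvg.2 h (Finsupp.support_smul h1)
      rcases lt_or_eq_of_le hle with h2 | h2
      · exact Or.inr h2
      · exfalso
        rw [h2] at hh
        exact (Finsupp.mem_support_iff.mp hh) hyg

lemma mem_sup_V_W [WellFoundedLT G] (x : G →₀ K) : x ∈ V ⊔ W V := by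
  classical
  -- main induction on a bound for the leading part of x in L V
  have main : ∀ g : G, ∀ x : G →₀ K, (∀ h ∈ x.support, h ∈ L V → h ≤ g) →
      x ∈ V ⊔ W V := by
    intro g
    induction g using WellFoundedLT.induction with
    | ind g IH =>
      intro x hx
      -- first obtain y with x - y ∈ V and all L-support of y strictly below g
      obtain ⟨y, hxy, hy⟩ : ∃ y : G →₀ K, x - y ∈ V ∧
          ∀ h ∈ y.support, h ∈ L V → h < g := by
        by_cases hgL : g ∈ L V
        · obtain ⟨y, h1, h2, h3⟩ := sub_step V hgL x
          refine ⟨y, h1, fun h hh hhL => ?_⟩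
          rcases h3 h hh with h4 | h4
          · rcases lt_or_eq_of_le (hx h h4 hhL) with h5 | h5
            · exact h5
            · exfalso; rw [h5] at hh; exact Finsupp.mem_support_iff.mp hh h2
          · exact h4
        · refine ⟨x, by simp, fun h hh hhL => ?_⟩
          rcases lt_or_eq_of_le (hx h hh hhL) with h5 | h5
          · exact h5
          · exact absurd (h5 ▸ hhL) hgL
      -- now deal with y
      have hy' : y ∈ V ⊔ W V := by
        set S : Finset G := y.support.filter (fun h => h ∈ L V) with hS
        rcases S.eq_empty_or_nonempty with hSe | hSne
        · apply Submodule.mem_sup_right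
          rw [mem_W_iff]
          intro h hhL
          by_contra h0
          have : h ∈ S := Finset.mem_filter.mpr ⟨Finsupp.mem_support_iff.mpr h0, hhL⟩
          simp [hSe] at this
        · set m := S.max' hSne with hm
          have hmS : m ∈ S := S.max'_mem hSne
          have hmlt : m < g := by
            obtain ⟨h1, h2⟩ := Finset.mem_filter.mp hmS
            exact hy m h1 h2
          apply IH m hmlt y
          intro h hh hhL
          exact S.le_max' h (Finset.mem_filter.mpr ⟨hh, hhL⟩)
      have : x = (x - y) + y := by abel
      rw [this]
      exact Submodule.add_mem _ (Submodule.mem_sup_left hxy) hy'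
  -- conclude for arbitrary x
  classical
  set S : Finset G := x.support.filter (fun h => h ∈ L V) with hS
  rcases S.eq_empty_or_nonempty with hSe | hSne
  · apply Submodule.mem_sup_right
    rw [mem_W_iff]
    intro h hhL
    by_contra h0
    have : h ∈ S := Finset.mem_filter.mpr ⟨Finsupp.mem_support_iff.mpr h0, hhL⟩
    simp [hSe] at this
  · exact main (S.max' hSne) x
      (fun h hh hhL => S.le_max' h (Finset.mem_filter.mpr ⟨hh, hhL⟩))

lemma isCompl_V_W [WellFoundedLT G] : IsCompl V (W V) :=
  ⟨disjoint_V_W V, codisjoint_iff.mpr (eq_top_iff.mpr fun x _ => mem_sup_V_W V x)⟩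

section RedOp

variable {T : Module.End K (G →₀ K)}

lemma idem (hT : IsRedOp T) (x : G →₀ K) : T (T x) = T x := by
  have := LinearMap.ext_iff.mp hT.1 x
  simpa using this

lemma supp_single_le (hT : IsRedOp T) (g : G) :
    ∀ h ∈ (T (Finsupp.single g 1)).support, h ≤ g := by
  intro h hh
  rcases hT.2 g with h1 | h1
  · rw [h1] at hh
    rcases Finset.mem_singleton.mp (Finsupp.support_single_subset hh)
    exact le_rfl
  · exact le_of_lt (h1 h hh)

lemma T_apply_sum (T : Module.End K (G →₀ K)) (y : G →₀ K) :
    T y = y.sum fun g a => a • T (Finsupp.single g 1) := by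
  conv_lhs => rw [← Finsupp.sum_single y, map_finsuppSum]
  refine Finsupp.sum_congr fun g hg => ?_
  rw [← Finsupp.smul_single_one g (y g), map_smul]

lemma exists_of_mem_support_T (T : Module.End K (G →₀ K)) {x : G →₀ K} {h : G}
    (hh : h ∈ (T x).support) :
    ∃ g ∈ x.support, h ∈ (T (Finsupp.single g 1)).support := by
  have h0 : (T x) h ≠ 0 := Finsupp.mem_support_iff.mp hh
  rw [T_apply_sum, Finsupp.sum_apply] at h0
  obtain ⟨g, hg, hne⟩ := Finset.exists_ne_zero_of_sum_ne_zero h0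
  refine ⟨g, hg, Finsupp.mem_support_iff.mpr fun h0' => hne ?_⟩
  simp [h0']

lemma support_T_lt (hT : IsRedOp T) {x : G →₀ K} {g : G}
    (hx : ∀ h ∈ x.support, h < g) : ∀ h ∈ (T x).support, h < g := by
  intro h hh
  obtain ⟨g', hg', hh'⟩ := exists_of_mem_support_T T hh
  exact lt_of_le_of_lt (supp_single_le hT g' h hh') (hx g' hg')

lemma T_fixed (hT : IsRedOp T) {y : G →₀ K}
    (h : ∀ g ∈ y.support, T (Finsupp.single g 1) = Finsupp.single g 1) :
    T y = y := by
  rw [T_apply_sum]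
  conv_rhs => rw [← Finsupp.sum_single y]
  refine Finsupp.sum_congr fun g hg => ?_
  rw [h g hg, Finsupp.smul_single_one]

lemma nonreduced_mem_L (hT : IsRedOp T) (hker : LinearMap.ker T = V) {g : G}
    (h : T (Finsupp.single g 1) ≠ Finsupp.single g 1) : g ∈ L V := by
  have hlt : ∀ h' ∈ (T (Finsupp.single g 1)).support, h' < g := (hT.2 g).resolve_left h
  set d : G →₀ K := Finsupp.single g 1 - T (Finsupp.single g 1) with hd
  have hdV : d ∈ V := by
    rw [← hker, LinearMap.mem_ker, map_sub, idem hT, sub_self]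
  have hTg : (T (Finsupp.single g 1)) g = 0 := by
    by_contra h0
    exact lt_irrefl g (hlt g (Finsupp.mem_support_iff.mpr h0))
  have hdg : d g = 1 := by
    simp [hd, hTg]
  refine ⟨d, hdV, Finsupp.mem_support_iff.mpr (by rw [hdg]; exact one_ne_zero), ?_⟩
  intro h' hh'
  rcases Finset.mem_union.mp (Finsupp.support_sub hh') with h1 | h1
  · rcases Finset.mem_singleton.mp (Finsupp.support_single_subset h1)
    exact le_rfl
  · exact le_of_lt (hlt h' h1)

lemma mem_L_nonreduced (hT : IsRedOp T) (hker : LinearMap.ker T = V) {g : G}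
    (hg : g ∈ L V) : T (Finsupp.single g 1) ≠ Finsupp.single g 1 := by
  obtain ⟨v, hvV, hvg⟩ := hg
  have hc : v g ≠ 0 := Finsupp.mem_support_iff.mp hvg.1
  set w : G →₀ K := Finsupp.single g 1 - (v g)⁻¹ • v with hw
  have hwg : w g = 0 := by
    simp only [hw, Finsupp.sub_apply, Finsupp.smul_apply, Finsupp.single_eq_same,
      smul_eq_mul]
    field_simp
    simp
  have hwlt : ∀ h ∈ w.support, h < g := by
    intro h hh
    have hne : h ≠ g := fun he => Finsupp.mem_support_iff.mp (he ▸ hh) hwg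
    rcases Finset.mem_union.mp (Finsupp.support_sub hh) with h1 | h1
    · exact absurd (Finset.mem_singleton.mp (Finsupp.support_single_subset h1)) hne
    · exact lt_of_le_of_ne (hvg.2 h (Finsupp.support_smul h1)) hne
  have hTv : T v = 0 := by rw [← LinearMap.mem_ker, hker]; exact hvV
  have hTeq : T (Finsupp.single g 1) = T w := by
    rw [hw, map_sub, map_smul, hTv, smul_zero, sub_zero]
  intro hfix
  have : g ∈ (T w).support := by
    rw [← hTeq, hfix]
    simp
  exact lt_irrefl g (support_T_lt hT hwlt g this)

lemma image_reduced (hT : IsRedOp T) (x : G →₀ K) :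
    ∀ h ∈ (T x).support, T (Finsupp.single h 1) = Finsupp.single h 1 := by
  classical
  set y : G →₀ K := T x with hy
  have hTy : T y = y := idem hT x
  set S : Finset G :=
    y.support.filter (fun h => T (Finsupp.single h 1) ≠ Finsupp.single h 1) with hS
  rcases S.eq_empty_or_nonempty with hSe | hSne
  · intro h hh
    by_contra h0
    have : h ∈ S := Finset.mem_filter.mpr ⟨hh, h0⟩
    simp [hSe] at this
  · exfalso
    set g₀ := S.max' hSne with hg₀
    obtain ⟨hg₀supp, hg₀nr⟩ := Finset.mem_filter.mp (S.max'_mem hSne)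
    have hyg₀ : y g₀ = 0 := by
      conv_lhs => rw [← hTy, T_apply_sum, Finsupp.sum_apply]
      apply Finset.sum_eq_zero
      intro h hh
      by_cases hred : T (Finsupp.single h 1) = Finsupp.single h 1
      · have hne : h ≠ g₀ := fun he => hg₀nr (by rw [← hg₀, ← he]; exact hred)
        simp [hred, Finsupp.single_apply, hne]
      · have hlt : ∀ h' ∈ (T (Finsupp.single h 1)).support, h' < h :=
          (hT.2 h).resolve_left hred
        have hz : (T (Finsupp.single h 1)) g₀ = 0 := by
          by_contra h0
          have h1 : g₀ < h := hlt g₀ (Finsupp.mem_support_iff.mpr h0)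
          have h2 : h ∈ S := Finset.mem_filter.mpr ⟨hh, hred⟩
          exact lt_irrefl g₀ (lt_of_lt_of_le h1 (S.le_max' h h2))
        simp [hz]
    exact Finsupp.mem_support_iff.mp hg₀supp hyg₀

lemma image_mem_W (hT : IsRedOp T) (hker : LinearMap.ker T = V) (x : G →₀ K) :
    T x ∈ W V := by
  rw [mem_W_iff]
  intro g hgL
  by_contra h0
  exact mem_L_nonreduced V hT hker hgL
    (image_reduced hT x g (Finsupp.mem_support_iff.mpr h0))

lemma sub_image_mem (hT : IsRedOp T) (hker : LinearMap.ker T = V) (x : G →₀ K) :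
    x - T x ∈ V := by
  rw [← hker, LinearMap.mem_ker, map_sub, idem hT, sub_self]

end RedOp

section Existence

variable [WellFoundedLT G]

/-- The canonical reduction operator with kernel `V`: projection onto `W V` along `V`. -/
noncomputable def T0 : Module.End K (G →₀ K) :=
  (W V).subtype ∘ₗ Submodule.projectionOnto (W V) V (isCompl_V_W V).symm

lemma T0_mem_W (x : G →₀ K) : T0 V x ∈ W V := by
  simp only [T0, LinearMap.comp_apply, Submodule.subtype_apply]
  exact Submodule.coe_mem _

lemma T0_fixes {w : G →₀ K} (hw : w ∈ W V) : T0 V w = w := by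
  simp only [T0, LinearMap.comp_apply, Submodule.subtype_apply]
  rw [show w = ((⟨w, hw⟩ : W V) : G →₀ K) from rfl,
    Submodule.projectionOnto_apply_left]

lemma T0_ker : LinearMap.ker (T0 V) = V := by
  rw [T0, LinearMap.ker_comp, Submodule.ker_subtype, Submodule.comap_bot,
    Submodule.ker_projectionOnto]

lemma T0_sub_mem (x : G →₀ K) : x - T0 V x ∈ V := by
  have h := Submodule.projection_add_projection_eq_self (isCompl_V_W V) x
  simp only [Submodule.projection_apply] at h
  have : x - T0 V x =
      (V.projectionOnto (W V) (isCompl_V_W V) x : G →₀ K) := by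
    rw [T0]
    simp only [LinearMap.comp_apply, Submodule.subtype_apply]
    nth_rewrite 1 [← h]
    abel
  rw [this]
  exact Submodule.coe_mem _

lemma T0_isRedOp : IsRedOp (T0 V) := by
  constructor
  · refine LinearMap.ext fun x => ?_
    exact T0_fixes V (T0_mem_W V x)
  · intro g
    by_cases hgL : g ∈ L V
    · right
      intro h hh
      set y : G →₀ K := T0 V (Finsupp.single g 1) with hy
      have hyW : y ∈ W V := T0_mem_W V _
      have hyg : y g = 0 := (mem_W_iff V).mp hyW g hgL
      set d : G →₀ K := Finsupp.single g 1 - y with hd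
      have hdV : d ∈ V := T0_sub_mem V _
      by_contra hnot
      have hge : g ≤ h := le_of_not_gt hnot
      have hne : h ≠ g := fun he => Finsupp.mem_support_iff.mp (he ▸ hh) hyg
      have hgt : g < h := lt_of_le_of_ne hge (Ne.symm hne)
      have hdh : d h ≠ 0 := by
        have h1 : (Finsupp.single g 1 : G →₀ K) h = 0 :=
          Finsupp.single_eq_of_ne' (Ne.symm hne)
        simp only [hd, Finsupp.sub_apply, h1, zero_sub, neg_ne_zero]
        exact Finsupp.mem_support_iff.mp hh
      have hd0 : d ≠ 0 := fun h0 => hdh (by rw [h0]; rfl)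
      obtain ⟨m, hm⟩ := exists_isLeadingGen hd0
      have hmL : m ∈ L V := ⟨d, hdV, hm⟩
      have hym : y m = 0 := (mem_W_iff V).mp hyW m hmL
      have hmh : h ≤ m := hm.2 h (Finsupp.mem_support_iff.mpr hdh)
      have hmg : m ≠ g := ne_of_gt (lt_of_lt_of_le hgt hmh)
      have : d m = 0 := by
        simp [hd, Finsupp.single_eq_of_ne' (Ne.symm hmg), hym]
      exact Finsupp.mem_support_iff.mp hm.1 this
    · left
      apply T0_fixes
      rw [mem_W_iff]
      intro h hhL
      exact Finsupp.single_eq_of_ne' (fun he => hgL (he ▸ hhL))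

end Existence

lemma redOp_unique {T T' : Module.End K (G →₀ K)}
    (hT : IsRedOp T) (hker : LinearMap.ker T = V)
    (hT' : IsRedOp T') (hker' : LinearMap.ker T' = V) : T = T' := by
  refine LinearMap.ext fun x => ?_
  have h1 : T x - T' x ∈ V := by
    have : T x - T' x = (x - T' x) - (x - T x) := by abel
    rw [this]
    exact Submodule.sub_mem V (sub_image_mem V hT' hker' x) (sub_image_mem V hT hker x)
  have h2 : T x - T' x ∈ W V :=
    Submodule.sub_mem (W V) (image_mem_W V hT hker x) (image_mem_W V hT' hker' x)
  have := Submodule.disjoint_def.mp (disjoint_V_W V) _ h1 h2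
  exact sub_eq_zero.mp this

lemma L_eq_leadingGens {B : Set (G →₀ K)} (hB : IsReducedBasis V B) :
    L V = {g : G | ∃ e ∈ B, IsLeadingGen e g} := by
  classical
  obtain ⟨hBV, -, hspan, hlead1, hortho⟩ := hB
  ext g
  simp only [Set.mem_setOf_eq]
  constructor
  · rintro ⟨v, hvV, hvg⟩
    have hv0 : v g ≠ 0 := Finsupp.mem_support_iff.mp hvg.1
    have hvspan : v ∈ Submodule.span K B := hspan ▸ hvV
    obtain ⟨c, hcB, hcv⟩ := Submodule.mem_span_set.mp hvspan
    have hSne : c.support.Nonempty := by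
      rcases c.support.eq_empty_or_nonempty with h | h
      · exfalso
        have : c = 0 := Finsupp.support_eq_empty.mp h
        rw [this] at hcv
        simp at hcv
        exact hv0 (by rw [← hcv]; rfl)
      · exact h
    -- each basis element in the support has a (unique) leading generator
    set maxfun : (G →₀ K) → G :=
      fun e => if h : e.support.Nonempty then e.support.max' h else g with hmaxfun
    have hmf : ∀ e ∈ c.support, IsLeadingGen e (maxfun e) ∧ e (maxfun e) = 1 := by
      intro e he
      obtain ⟨ge, hge, hge1⟩ := hlead1 e (hcB he)
      have hene : e.support.Nonempty := ⟨ge, hge.1⟩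
      have hlg : IsLeadingGen e (maxfun e) := by
        rw [hmaxfun]; simp only [hene, dif_pos]
        exact ⟨e.support.max'_mem hene, fun g' hg' => e.support.le_max' g' hg'⟩
      have : maxfun e = ge := isLeadingGen_unique hlg hge
      exact ⟨hlg, by rw [this]; exact hge1⟩
    set gstar := c.support.sup' hSne maxfun with hgstar
    obtain ⟨estar, hestar, hestareq⟩ := Finset.exists_mem_eq_sup' hSne maxfun
    -- value of v at gstar is c estar
    have hlgstar : IsLeadingGen estar gstar := by
      rw [hgstar, hestareq]; exact (hmf estar hestar).1
    have hones : estar gstar = 1 := by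
      rw [hgstar, hestareq]; exact (hmf estar hestar).2
    have hval : v gstar = c estar := by
      rw [← hcv, Finsupp.sum_apply, Finsupp.sum]
      rw [Finset.sum_eq_single estar]
      · rw [Finsupp.smul_apply, smul_eq_mul, hones, mul_one]
      · intro e he hne
        rw [Finsupp.smul_apply, smul_eq_mul,
          hortho e (hcB he) estar (hcB hestar) hne gstar hlgstar, mul_zero]
      · intro h; exact absurd hestar h
    have hcne : c estar ≠ 0 := Finsupp.mem_support_iff.mp hestar
    have h1 : gstar ≤ g := hvg.2 gstar (Finsupp.mem_support_iff.mpr (hval ▸ hcne))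
    have h2 : g ≤ gstar := by
      have hvg' : v g ≠ 0 := hv0
      rw [← hcv, Finsupp.sum_apply, Finsupp.sum] at hvg'
      obtain ⟨e, he, hne⟩ := Finset.exists_ne_zero_of_sum_ne_zero hvg'
      have heg : e g ≠ 0 := by
        intro h0
        apply hne
        rw [Finsupp.smul_apply, smul_eq_mul, h0, mul_zero]
      have : g ≤ maxfun e := (hmf e he).1.2 g (Finsupp.mem_support_iff.mpr heg)
      exact le_trans this (Finset.le_sup' maxfun he)
    have hgeq : g = gstar := le_antisymm h2 h1
    exact ⟨estar, hcB hestar, hgeq ▸ hlgstar⟩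
  · rintro ⟨e, heB, heg⟩
    exact ⟨e, hBV heB, heg⟩

end RedOpAux

/-- For every subspace `V` of `K⟨G⟩` there is a unique reduction operator with
kernel `V`; moreover its set of non-reduced generators is the set of leading
generators of any reduced basis of `V`. -/
theorem exists_unique_redOp_ker {K G : Type*} [Field K] [LinearOrder G]
    [WellFoundedLT G] (V : Submodule K (G →₀ K)) :
    (∃! T : Module.End K (G →₀ K), IsRedOp T ∧ LinearMap.ker T = V) ∧
    (∀ T : Module.End K (G →₀ K), IsRedOp T → LinearMap.ker T = V →
      ∀ B : Set (G →₀ K), IsReducedBasis V B →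
        {g : G | T (Finsupp.single g 1) ≠ Finsupp.single g 1} =
          {g : G | ∃ e ∈ B, IsLeadingGen e g}) := by
  constructor
  · refine ⟨RedOpAux.T0 V, ⟨RedOpAux.T0_isRedOp V, RedOpAux.T0_ker V⟩, ?_⟩
    rintro T' ⟨hT', hker'⟩
    exact RedOpAux.redOp_unique V hT' hker'
      (RedOpAux.T0_isRedOp V) (RedOpAux.T0_ker V)
  · intro T hT hker B hB
    have h1 : {g : G | T (Finsupp.single g 1) ≠ Finsupp.single g 1} = RedOpAux.L V :=
      Set.ext fun g => ⟨fun h => RedOpAux.nonreduced_mem_L V hT hker h,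
        fun h => RedOpAux.mem_L_nonreduced V hT hker h⟩
    rw [h1, RedOpAux.L_eq_leadingGens V hB]
end

section
/- For reduction operators T₁ and T₂ relative to a well-ordered set (G,<), T₁ ≼ T₂ (i.e., ker(T₂) ⊆ ker(T₁)) if and only if T₁ ∘ T₂ = T₁. -/
/-- For reduction operators, `ker T₂ ⊆ ker T₁` iff `T₁ ∘ T₂ = T₁`. -/
theorem redOp_le_iff_comp_eq {K G : Type*} [Field K] [LinearOrder G]
    [WellFoundedLT G] (T₁ T₂ : Module.End K (G →₀ K))
    (h₁ : IsRedOp T₁) (h₂ : IsRedOp T₂) :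
    LinearMap.ker T₂ ≤ LinearMap.ker T₁ ↔ T₁ ∘ₗ T₂ = T₁ := by
  constructor
  · intro h
    apply LinearMap.ext; intro x
    have hidem : T₂ (T₂ x) = T₂ x := congrArg (fun f => f x) h₂.1
    have hk : x - T₂ x ∈ LinearMap.ker T₂ := by
      simp [LinearMap.mem_ker, map_sub, hidem]
    have hk1 : T₁ (x - T₂ x) = 0 := h hk
    have : T₁ x - T₁ (T₂ x) = 0 := by rw [← map_sub]; exact hk1
    exact (sub_eq_zero.mp this).symm
  · intro h x hx
    have : T₁ (T₂ x) = T₁ x := congrArg (fun f => f x) h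
    simp only [LinearMap.mem_ker] at hx ⊢
    rw [← this, hx, map_zero]
end

section
/- A subset F of reduction operators relative to a well-ordered set (G,<) is confluent if and only if it has the Church-Rosser property. -/
section Aux

variable {K G : Type*} [Field K] [LinearOrder G]

/-- Apply a linear endomorphism of `G →₀ K` to `v` as a sum over the support. -/
lemma endo_apply_eq_sum (T : Module.End K (G →₀ K)) (v : G →₀ K) :
    T v = v.sum fun h c => c • T (Finsupp.single h 1) := by
  conv_lhs => rw [← Finsupp.sum_single v]
  rw [map_finsuppSum]
  refine Finsupp.sum_congr fun h _ => ?_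
  rw [← map_smul, Finsupp.smul_single' (v h) h 1, mul_one]

lemma support_endo_apply (T : Module.End K (G →₀ K)) (v : G →₀ K) {g' : G}
    (hg' : g' ∈ (T v).support) :
    ∃ h ∈ v.support, g' ∈ (T (Finsupp.single h 1)).support := by
  classical
  rw [endo_apply_eq_sum] at hg'
  have := Finsupp.support_sum hg'
  obtain ⟨h, hh, hg⟩ := Finset.mem_biUnion.mp this
  exact ⟨h, hh, Finsupp.support_smul hg⟩

/-- If an endomorphism fixes all basis vectors in the support of `v`, it fixes `v`. -/
lemma endo_fixes (T : Module.End K (G →₀ K)) (v : G →₀ K)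
    (h : ∀ g ∈ v.support, T (Finsupp.single g 1) = Finsupp.single g 1) : T v = v := by
  rw [endo_apply_eq_sum]
  conv_rhs => rw [← Finsupp.sum_single v]
  refine Finsupp.sum_congr fun g hg => ?_
  rw [h g hg, Finsupp.smul_single' (v g) g 1, mul_one]

end Aux

section Main

variable {K G : Type*} [Field K] [LinearOrder G] [WellFoundedLT G]

/-- Main induction: every `v` rewrites by some `R ∈ ⟨F⟩` into an element whose
support consists of elements reduced by every `T ∈ F`. -/
lemma exists_rewrite (F : Set (Module.End K (G →₀ K)))
    (hF : ∀ T ∈ F, IsRedOp T) (v : G →₀ K) :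
    ∃ R ∈ Submonoid.closure F, ∀ g ∈ (R v).support, ∀ T ∈ F,
      T (Finsupp.single g 1) = Finsupp.single g 1 := by
  classical
  set Red : G → Prop := fun g => ∀ T ∈ F, T (Finsupp.single g 1) = Finsupp.single g 1 with hRed
  set bad : (G →₀ K) → Finset G := fun v => v.support.filter (fun g => ¬ Red g) with hbad
  suffices H : ∀ m : WithBot G, ∀ v : G →₀ K, (bad v).max = m →
      ∃ R ∈ Submonoid.closure F, ∀ g ∈ (R v).support, Red g by
    exact H _ v rfl
  intro m
  induction m using WellFoundedLT.induction with
  | _ m IH =>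
    intro v hm
    by_cases hne : (bad v).Nonempty
    · -- take the maximal bad element g
      set g := (bad v).max' hne with hg
      have hgmax : (bad v).max = (g : WithBot G) := (Finset.coe_max' hne).symm
      have hgmem : g ∈ bad v := Finset.max'_mem _ hne
      have hgbad : ¬ Red g := (Finset.mem_filter.mp hgmem).2
      have hgbad' : ∃ T ∈ F, T (Finsupp.single g 1) ≠ Finsupp.single g 1 := by
        by_contra hc
        push_neg at hc
        exact hgbad fun T hT => hc T hT
      obtain ⟨T, hTF, hTg⟩ := hgbad'
      -- every bad element of T v is < g
      have hlt : ∀ x ∈ bad (T v), x < g := by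
        intro x hx
        obtain ⟨hxsupp, hxbad⟩ := Finset.mem_filter.mp hx
        obtain ⟨h, hh, hxh⟩ := support_endo_apply T v hxsupp
        by_cases hhred : Red h
        · rw [hhred T hTF, Finsupp.support_single_ne_zero h one_ne_zero,
            Finset.mem_singleton] at hxh
          exact absurd (hxh ▸ hhred) hxbad
        · have hhbad : h ∈ bad v := Finset.mem_filter.mpr ⟨hh, hhred⟩
          have hhg : h ≤ g := Finset.le_max' _ h hhbad
          rcases (hF T hTF).2 h with heq | hlt'
          · rw [heq, Finsupp.support_single_ne_zero h one_ne_zero,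
              Finset.mem_singleton] at hxh
            subst hxh
            rcases lt_or_eq_of_le hhg with h' | h'
            · exact h'
            · exact absurd (h' ▸ heq) hTg
          · exact lt_of_lt_of_le (hlt' x hxh) hhg
      have hmlt : (bad (T v)).max < m := by
        rw [← hm, hgmax]
        rcases Finset.eq_empty_or_nonempty (bad (T v)) with he | hne'
        · rw [he]; exact WithBot.bot_lt_coe g
        · rw [← Finset.coe_max' hne']
          exact WithBot.coe_lt_coe.mpr (hlt _ (Finset.max'_mem _ hne'))
      obtain ⟨R', hR', hgood⟩ := IH _ hmlt (T v) rfl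
      refine ⟨R' * T, Submonoid.mul_mem _ hR' (Submonoid.subset_closure hTF), ?_⟩
      intro x hx
      exact hgood x (by rwa [Module.End.mul_apply] at hx)
    · refine ⟨1, Submonoid.one_mem _, ?_⟩
      intro x hx
      rw [Finset.not_nonempty_iff_eq_empty] at hne
      by_contra hxbad
      have : x ∈ bad v := Finset.mem_filter.mpr ⟨by simpa using hx, hxbad⟩
      simp [hne] at this

/-- For `R` in the closure of `F`, `W ∘ R = W` on every vector. -/
lemma W_comp_eq (F : Set (Module.End K (G →₀ K)))
    (hF : ∀ T ∈ F, IsRedOp T) (W : Module.End K (G →₀ K))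
    (hker : LinearMap.ker W = ⨆ T ∈ F, LinearMap.ker T)
    {R : Module.End K (G →₀ K)} (hR : R ∈ Submonoid.closure F) (v : G →₀ K) :
    W (R v) = W v := by
  induction hR using Submonoid.closure_induction generalizing v with
  | mem T hT =>
    have hkT : LinearMap.ker T ≤ LinearMap.ker W := by
      rw [hker]; exact le_iSup₂_of_le T hT le_rfl
    have : v - T v ∈ LinearMap.ker T := by
      rw [LinearMap.mem_ker, map_sub, ← LinearMap.comp_apply, ← Module.End.mul_eq_comp]
      have h2 : T ∘ₗ T = T := (hF T hT).1
      rw [Module.End.mul_eq_comp, h2, sub_self]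
    have := hkT this
    rw [LinearMap.mem_ker, map_sub, sub_eq_zero] at this
    exact this.symm
  | one => simp
  | mul x y hx hy ihx ihy =>
    rw [Module.End.mul_apply, ihx, ihy]

end Main

/-- A set of reduction operators is confluent iff it has the Church-Rosser
property. Here `W` is the lower bound `∧F`, i.e. the reduction operator whose
kernel is the sum of the kernels of the elements of `F`. -/
theorem confluent_iff_churchRosser {K G : Type*} [Field K] [LinearOrder G]
    [WellFoundedLT G] (F : Set (Module.End K (G →₀ K)))
    (hF : ∀ T ∈ F, IsRedOp T) (W : Module.End K (G →₀ K)) (hW : IsRedOp W)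
    (hker : LinearMap.ker W = ⨆ T ∈ F, LinearMap.ker T) :
    ({g : G | ∀ T ∈ F, T (Finsupp.single g 1) = Finsupp.single g 1} ⊆
        {g : G | W (Finsupp.single g 1) = Finsupp.single g 1}) ↔
      (∀ v : G →₀ K, ∃ R ∈ Submonoid.closure F, R v = W v) := by
  constructor
  · intro hsub v
    obtain ⟨R, hR, hgood⟩ := exists_rewrite F hF v
    refine ⟨R, hR, ?_⟩
    have h1 : W (R v) = R v :=
      endo_fixes W (R v) fun g hg => hsub (hgood g hg)
    have h2 : W (R v) = W v := W_comp_eq F hF W hker hR v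
    rw [← h1, h2]
  · intro hCR g hg
    obtain ⟨R, hR, hRv⟩ := hCR (Finsupp.single g 1)
    have hfix : ∀ R' ∈ Submonoid.closure F, R' (Finsupp.single g 1) = Finsupp.single g 1 := by
      intro R' hR'
      induction hR' using Submonoid.closure_induction with
      | mem T hT => exact hg T hT
      | one => simp
      | mul x y hx hy ihx ihy => rw [Module.End.mul_apply, ihy, ihx]
    show W (Finsupp.single g 1) = Finsupp.single g 1
    rw [← hRv, hfix R hR]
end

section
/- Every element of K⟨G⟩ admits an F-normal form: for every v ∈ K⟨G⟩ there exists R in the monoid generated by F under composition such that R(v) lies in the span of Red(F). -/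
/-- Elements of the closure fix vectors fixed by every generator. -/
lemma closure_fix {K G : Type*} [Field K] [LinearOrder G]
    (F : Set (Module.End K (G →₀ K))) (x : G →₀ K)
    (hx : ∀ T ∈ F, T x = x) :
    ∀ R ∈ Submonoid.closure F, R x = x := by
  intro R hR
  induction hR using Submonoid.closure_induction with
  | mem T hT => exact hx T hT
  | one => rfl
  | mul a b _ _ ha hb => simp [Module.End.mul_apply, hb, ha]

/-- Support of `T v` is controlled by supports of `T (single g' 1)`. -/
lemma support_apply_subset {K G : Type*} [Field K] [LinearOrder G]
    (T : Module.End K (G →₀ K)) (v : G →₀ K) :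
    (T v).support ⊆ v.support.biUnion fun g' => (T (Finsupp.single g' 1)).support := by
  classical
  have hv : v = v.sum fun g' c => c • Finsupp.single g' (1 : K) := by
    simp [Finsupp.smul_single, Finsupp.sum_single]
  intro a ha
  rw [hv] at ha
  rw [Finsupp.sum] at ha
  rw [map_sum] at ha
  have := Finsupp.support_finset_sum ha
  obtain ⟨g', hg', hag'⟩ := Finset.mem_biUnion.mp this
  refine Finset.mem_biUnion.mpr ⟨g', hg', ?_⟩
  rw [map_smul] at hag'
  exact Finsupp.support_smul hag'

/-- Every element of `K⟨G⟩` admits an `F`-normal form: it rewrites, via some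
element of the monoid generated by `F`, into the span of `Red(F)`. -/
theorem exists_normal_form {K G : Type*} [Field K] [LinearOrder G]
    [WellFoundedLT G] (F : Set (Module.End K (G →₀ K)))
    (hF : ∀ T ∈ F, IsRedOp T) (v : G →₀ K) :
    ∃ R ∈ Submonoid.closure F,
      R v ∈ Submodule.span K
        ((fun g => Finsupp.single g (1 : K)) ''
          {g : G | ∀ T ∈ F, T (Finsupp.single g 1) = Finsupp.single g 1}) := by
  classical
  set S := Submodule.span K
        ((fun g => Finsupp.single g (1 : K)) ''
          {g : G | ∀ T ∈ F, T (Finsupp.single g 1) = Finsupp.single g 1}) with hS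
  suffices h : ∀ g : G, ∀ w : G →₀ K, (∀ a ∈ w.support, a ≤ g) →
      ∃ R ∈ Submonoid.closure F, R w ∈ S by
    by_cases hv : v = 0
    · exact ⟨1, one_mem _, by simp [hv]⟩
    · have hne : v.support.Nonempty := Finsupp.support_nonempty_iff.mpr hv
      exact h (v.support.max' hne) v (fun a ha => Finset.le_max' _ a ha)
  intro g
  induction g using WellFoundedLT.induction with
  | ind g IH =>
  intro w hw
  by_cases hw0 : w = 0
  · exact ⟨1, one_mem _, by simp [hw0]⟩
  by_cases hg : g ∈ w.support
  · -- g is the (possible) top element of the support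
    by_cases hred : ∀ T ∈ F, T (Finsupp.single g 1) = Finsupp.single g 1
    · -- g is reduced: split off the g-component
      set u := Finsupp.erase g w with hu
      have hsingle : Finsupp.single g (w g) = (w g) • Finsupp.single g (1 : K) := by
        simp [Finsupp.smul_single]
      have hdecomp : w = u + Finsupp.single g (w g) := by
        ext a
        by_cases hag : a = g
        · simp [hu, hag]
        · simp [hu, hag, Finsupp.single_eq_of_ne (fun h => hag h.symm)]
      have hus : ∀ a ∈ u.support, a < g := by
        intro a ha
        have ha' : u a ≠ 0 := Finsupp.mem_support_iff.mp ha
        by_cases hag : a = g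
        · exact absurd (by simp [hu, hag]) ha'
        · have hwa : w a ≠ 0 := by simpa [hu, Finsupp.erase_ne hag] using ha'
          exact lt_of_le_of_ne (hw a (Finsupp.mem_support_iff.mpr hwa)) hag
      have hsg : Finsupp.single g (1 : K) ∈ S := by
        exact Submodule.subset_span ⟨g, hred, rfl⟩
      by_cases hu0 : u = 0
      · refine ⟨1, one_mem _, ?_⟩
        simp only [Module.End.one_apply]
        rw [hdecomp, hu0, zero_add, hsingle]
        exact Submodule.smul_mem _ _ hsg
      · have hune : u.support.Nonempty := Finsupp.support_nonempty_iff.mpr hu0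
        set m := u.support.max' hune with hm
        have hmg : m < g := hus m (u.support.max'_mem hune)
        obtain ⟨R, hR, hRu⟩ := IH m hmg u (fun a ha => Finset.le_max' _ a ha)
        refine ⟨R, hR, ?_⟩
        rw [hdecomp, map_add, hsingle, map_smul,
          closure_fix F (Finsupp.single g 1) hred R hR]
        exact Submodule.add_mem _ hRu (Submodule.smul_mem _ _ hsg)
    · -- g is not reduced: apply a T that lowers g
      push_neg at hred
      obtain ⟨T, hTF, hTg⟩ := hred
      have hTlow : ∀ g' ∈ (T (Finsupp.single g 1)).support, g' < g :=
        ((hF T hTF).2 g).resolve_left hTg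
      have hTw : ∀ a ∈ (T w).support, a < g := by
        intro a ha
        obtain ⟨g', hg', hag'⟩ := Finset.mem_biUnion.mp (support_apply_subset T w ha)
        by_cases hgg : g' = g
        · exact hTlow a (hgg ▸ hag')
        · have hg'g : g' < g := lt_of_le_of_ne (hw g' hg') hgg
          rcases (hF T hTF).2 g' with hfix | hlow
          · rw [hfix] at hag'
            have : a = g' := Finset.mem_singleton.mp (Finsupp.support_single_subset hag')
            exact this ▸ hg'g
          · exact lt_trans (hlow a hag') hg'g
      by_cases hTw0 : T w = 0
      · exact ⟨T, Submonoid.subset_closure hTF, by simp [hTw0]⟩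
      · have hne : (T w).support.Nonempty := Finsupp.support_nonempty_iff.mpr hTw0
        set m := (T w).support.max' hne with hm
        have hmg : m < g := hTw m ((T w).support.max'_mem hne)
        obtain ⟨R, hR, hRTw⟩ := IH m hmg (T w) (fun a ha => Finset.le_max' _ a ha)
        exact ⟨R * T, mul_mem hR (Submonoid.subset_closure hTF),
          by rwa [Module.End.mul_apply]⟩
  · -- g not in support: shrink the bound
    have hne : w.support.Nonempty := Finsupp.support_nonempty_iff.mpr hw0
    set m := w.support.max' hne with hm
    have hmg : m < g := lt_of_le_of_ne (hw m (w.support.max'_mem hne))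
      (fun h => hg (h ▸ w.support.max'_mem hne))
    exact IH m hmg w (fun a ha => Finset.le_max' _ a ha)
end

section
/- For every v ∈ K⟨G⟩, (∧F)(v) is the smallest element, for the multiset order induced by <, of the set [v] of elements v' with v' − v ∈ ker(∧F). -/
open scoped Classical


/-- The multiset order on `K⟨G⟩` induced by `<` via supports. -/
def MulLE {K G : Type*} [Field K] [LinearOrder G] (v v' : G →₀ K) : Prop :=
  ∀ g ∈ v.support, g ∉ v'.support →
    ∃ g' ∈ v'.support, g' ∉ v.support ∧ g < g'

/-- Key evaluation lemma: if all elements of the support of `u` above `m` are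
reduced generators, then `(T u) m` is `u m` if `m` is reduced and `0` otherwise. -/
lemma redop_eval {K G : Type*} [Field K] [LinearOrder G]
    (T : Module.End K (G →₀ K))
    (hT : ∀ g : G, T (Finsupp.single g 1) = Finsupp.single g 1 ∨
      ∀ g' ∈ (T (Finsupp.single g 1)).support, g' < g)
    (u : G →₀ K) (m : G)
    (hm : ∀ h ∈ u.support, m < h → T (Finsupp.single h 1) = Finsupp.single h 1) :
    (T u) m = if T (Finsupp.single m 1) = Finsupp.single m 1 then u m else 0 := by
  have hTu : T u = u.support.sum (fun h => u h • T (Finsupp.single h 1)) := by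
    conv_lhs => rw [← Finsupp.sum_single u]
    rw [Finsupp.sum, map_sum]
    refine Finset.sum_congr rfl fun h hh => ?_
    rw [← map_smul, Finsupp.smul_single', mul_one]
  have hzero : ∀ h ∈ u.support, h ≠ m → (T (Finsupp.single h 1)) m = 0 := by
    intro h hh hne
    rcases hT h with h1 | h2
    · rw [h1, Finsupp.single_eq_of_ne' hne]
    · by_cases hlt : m < h
      · rw [hm h hh hlt, Finsupp.single_eq_of_ne' hne]
      · by_contra hne0
        exact hlt (h2 m (Finsupp.mem_support_iff.mpr hne0))
  rw [hTu, Finsupp.finset_sum_apply]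
  by_cases hred : T (Finsupp.single m 1) = Finsupp.single m 1
  · rw [if_pos hred]
    rw [Finset.sum_eq_single m]
    · rw [Finsupp.smul_apply, hred, Finsupp.single_eq_same, smul_eq_mul, mul_one]
    · intro h hh hne
      rw [Finsupp.smul_apply, hzero h hh hne, smul_zero]
    · intro hmem
      simp [Finsupp.notMem_support_iff.mp hmem]
  · rw [if_neg hred]
    refine Finset.sum_eq_zero fun h hh => ?_
    rw [Finsupp.smul_apply]
    by_cases hne : h = m
    · subst hne
      have h2 : ∀ g' ∈ (T (Finsupp.single h 1)).support, g' < h := (hT h).resolve_left hred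
      have : (T (Finsupp.single h 1)) h = 0 := by
        by_contra hne0
        exact absurd (h2 h (Finsupp.mem_support_iff.mpr hne0)) (lt_irrefl h)
      rw [this, smul_zero]
    · rw [hzero h hh hne, smul_zero]

/-- `(∧F)(v)` is the smallest element, for the multiset order, of the class
`[v] = {v' | v' - v ∈ ker(∧F)}`.  Here `W` denotes `∧F`. -/
theorem inf_is_min_of_class {K G : Type*} [Field K] [LinearOrder G]
    [WellFoundedLT G] (F : Set (Module.End K (G →₀ K)))
    (hF : ∀ T ∈ F, IsRedOp T) (W : Module.End K (G →₀ K)) (hW : IsRedOp W)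
    (hker : LinearMap.ker W = ⨆ T ∈ F, LinearMap.ker T) (v : G →₀ K) :
    W v - v ∈ LinearMap.ker W ∧
      ∀ v' : G →₀ K, v' - v ∈ LinearMap.ker W → MulLE (W v) v' := by
  classical
  obtain ⟨hidem, hsup⟩ := hW
  have hWWv : ∀ w : G →₀ K, W (W w) = W w := fun w => by
    have := congrArg (fun f : Module.End K (G →₀ K) => f w) hidem
    simpa using this
  constructor
  · rw [LinearMap.mem_ker, map_sub, hWWv, sub_self]
  · intro v' hv' g hg hg'
    rw [LinearMap.mem_ker] at hv'
    have hWv' : W v' = W v := by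
      have h1 : W v' - W v = 0 := by rw [← map_sub, hv']
      exact sub_eq_zero.mp h1
    set u : G →₀ K := v' - W v with hu
    have hker_u : W u = 0 := by
      rw [hu, map_sub, hWv', hWWv, sub_self]
    have hgu : g ∈ u.support := by
      rw [Finsupp.mem_support_iff, hu, Finsupp.sub_apply,
        Finsupp.notMem_support_iff.mp hg', zero_sub, neg_ne_zero]
      exact Finsupp.mem_support_iff.mp hg
    have hne : u.support.Nonempty := ⟨g, hgu⟩
    set m := u.support.max' hne with hmdef
    have hmax : ∀ h ∈ u.support, h ≤ m := fun h hh => Finset.le_max' _ h hh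
    have hum : u m ≠ 0 := Finsupp.mem_support_iff.mp (u.support.max'_mem hne)
    have h0 : (W u) m =
        if W (Finsupp.single m 1) = Finsupp.single m 1 then u m else 0 :=
      redop_eval W hsup u m (fun h hh hlt => absurd hlt (not_lt.mpr (hmax h hh)))
    have hnred : ¬ W (Finsupp.single m 1) = Finsupp.single m 1 := by
      intro hred
      rw [hker_u, if_pos hred] at h0
      exact hum h0.symm
    have hredWv : ∀ x ∈ (W v).support,
        W (Finsupp.single x 1) = Finsupp.single x 1 := by
      by_contra hc
      push_neg at hc
      obtain ⟨x, hx, hxnr⟩ := hc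
      set S := (W v).support.filter
        (fun y => ¬ W (Finsupp.single y 1) = Finsupp.single y 1) with hS
      have hSne : S.Nonempty := ⟨x, Finset.mem_filter.mpr ⟨hx, hxnr⟩⟩
      set n := S.max' hSne with hn
      have hnmem := S.max'_mem hSne
      rw [Finset.mem_filter] at hnmem
      have h0' : (W (W v)) n =
          if W (Finsupp.single n 1) = Finsupp.single n 1 then (W v) n else 0 := by
        refine redop_eval W hsup (W v) n fun h hh hlt => ?_
        by_contra hhnr
        exact absurd (S.le_max' h (Finset.mem_filter.mpr ⟨hh, hhnr⟩))
          (not_le.mpr hlt)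
      rw [hWWv, if_neg hnmem.2] at h0'
      exact Finsupp.mem_support_iff.mp hnmem.1 h0'
    have hmWv : m ∉ (W v).support := fun hmm => hnred (hredWv m hmm)
    refine ⟨m, ?_, hmWv, ?_⟩
    · rw [Finsupp.mem_support_iff]
      intro h3
      apply hum
      rw [hu, Finsupp.sub_apply, h3, Finsupp.notMem_support_iff.mp hmWv, sub_zero]
    · rcases (hmax g hgu).lt_or_eq with h | h
      · exact h
      · exact absurd (h ▸ hg) hmWv
end

section
/- A set F of reduction operators relative to a well-ordered set (G,<) is confluent if and only if it is locally confluent, i.e., for every v ∈ K⟨G⟩ and all T₁, T₂ ∈ F, there exists v' such that both T₁(v) and T₂(v) rewrite into v'. (Newman's Lemma for reduction operators.) -/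
open Finsupp Relation

set_option linter.unusedSectionVars false

section aux
variable {K G : Type*} [Field K] [LinearOrder G]

private lemma redop_idem {T : Module.End K (G →₀ K)} (hT : IsRedOp T) (v : G →₀ K) :
    T (T v) = T v := LinearMap.congr_fun hT.1 v

private lemma redop_sum (T : Module.End K (G →₀ K)) (v : G →₀ K) :
    T v = ∑ g ∈ v.support, v g • T (Finsupp.single g 1) := by
  conv_lhs => rw [← Finsupp.sum_single v]
  rw [Finsupp.sum, map_sum]
  refine Finset.sum_congr rfl fun g _ => ?_
  rw [← map_smul]
  congr 1
  rw [Finsupp.smul_single', mul_one]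

private lemma redop_apply (T : Module.End K (G →₀ K)) (v : G →₀ K) (h : G) :
    T v h = ∑ g ∈ v.support, v g * T (Finsupp.single g 1) h := by
  rw [redop_sum T v, Finsupp.finset_sum_apply]
  exact Finset.sum_congr rfl fun g _ => by rw [Finsupp.smul_apply, smul_eq_mul]

private lemma redop_support_le {T : Module.End K (G →₀ K)} (hT : IsRedOp T) (v : G →₀ K)
    {h : G} (hh : h ∈ (T v).support) : ∃ k ∈ v.support, h ≤ k := by
  by_contra hc
  push_neg at hc
  have h0 : T v h = 0 := by
    rw [redop_apply]
    refine Finset.sum_eq_zero fun k hk => ?_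
    have hkh : h ≠ k := fun e => absurd (hc k hk) (by rw [e]; exact fun hlt => lt_irrefl _ hlt)
    rcases hT.2 k with h1 | h1
    · rw [h1, Finsupp.single_apply, if_neg (fun e => hkh e.symm), mul_zero]
    · have : T (Finsupp.single k 1) h = 0 := by
        by_contra h2
        exact absurd (h1 h (Finsupp.mem_support_iff.mpr h2)) (not_lt.mpr (hc k hk).le)
      rw [this, mul_zero]
  exact Finsupp.mem_support_iff.mp hh h0

private lemma redop_fixed {T : Module.End K (G →₀ K)}
    {v : G →₀ K} (hv : ∀ k ∈ v.support, T (Finsupp.single k 1) = Finsupp.single k 1) :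
    T v = v := by
  rw [redop_sum T v]
  conv_rhs => rw [← Finsupp.sum_single v]
  rw [Finsupp.sum]
  refine Finset.sum_congr rfl fun g hg => ?_
  rw [hv g hg, Finsupp.smul_single', mul_one]

/-- the key coefficient computation: if all `T`-unreduced elements of the support of `v` are
`≤ g`, then at any `h ≥ g` the coefficient of `T v` is `v h * (T e_h)_h`. -/
private lemma redop_apply_high {T : Module.End K (G →₀ K)} (hT : IsRedOp T) (v : G →₀ K) (g : G)
    (hk : ∀ k ∈ v.support, T (Finsupp.single k 1) ≠ Finsupp.single k 1 → k ≤ g)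
    (h : G) (hgh : g ≤ h) : T v h = v h * T (Finsupp.single h 1) h := by
  rw [redop_apply]
  by_cases hmem : h ∈ v.support
  · refine Finset.sum_eq_single_of_mem h hmem fun k hkv hkh => ?_
    rcases hT.2 k with h1 | h1
    · rw [h1, Finsupp.single_apply, if_neg hkh, mul_zero]
    · have hks : k ≤ g := by
        refine hk k hkv fun e => ?_
        have hkk : k ∈ (T (Finsupp.single k (1:K))).support := by rw [e]; simp
        exact absurd (h1 k hkk) (lt_irrefl k)
      have : T (Finsupp.single k 1) h = 0 := by
        by_contra h2
        exact absurd (h1 h (Finsupp.mem_support_iff.mpr h2))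
          (not_lt.mpr (le_trans hks hgh))
      rw [this, mul_zero]
  · have hvh : v h = 0 := Finsupp.notMem_support_iff.mp hmem
    rw [hvh, zero_mul]
    refine Finset.sum_eq_zero fun k hkv => ?_
    have hkh : k ≠ h := fun e => hmem (e ▸ hkv)
    rcases hT.2 k with h1 | h1
    · rw [h1, Finsupp.single_apply, if_neg hkh, mul_zero]
    · have hks : k ≤ g := by
        refine hk k hkv fun e => ?_
        have hkk : k ∈ (T (Finsupp.single k (1:K))).support := by rw [e]; simp
        exact absurd (h1 k hkk) (lt_irrefl k)
      have : T (Finsupp.single k 1) h = 0 := by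
        by_contra h2
        exact absurd (h1 h (Finsupp.mem_support_iff.mpr h2)) (not_lt.mpr (hks.trans hgh))
      rw [this, mul_zero]

open scoped Classical in
private noncomputable def ind (v : G →₀ K) : G →₀ ℕ :=
  Finsupp.mapRange (fun c => if c = 0 then 0 else 1) (by simp) v

open scoped Classical in
private lemma step_dec {T : Module.End K (G →₀ K)} (hT : IsRedOp T) {v : G →₀ K}
    (hv : T v ≠ v) : Finsupp.Lex (· > ·) (· < ·) (ind (T v)) (ind v) := by
  set s := v.support.filter (fun k => T (Finsupp.single k 1) ≠ Finsupp.single k 1) with hs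
  have hne : s.Nonempty := by
    rw [Finset.filter_nonempty_iff]
    by_contra hemp
    push_neg at hemp
    exact hv (redop_fixed hemp)
  set g := s.max' hne with hg
  have hgs : g ∈ s := s.max'_mem hne
  have hgv : g ∈ v.support := (Finset.mem_filter.mp hgs).1
  have hgT : T (Finsupp.single g 1) ≠ Finsupp.single g 1 := (Finset.mem_filter.mp hgs).2
  have hk : ∀ k ∈ v.support, T (Finsupp.single k 1) ≠ Finsupp.single k 1 → k ≤ g :=
    fun k h1 h2 => s.le_max' k (Finset.mem_filter.mpr ⟨h1, h2⟩)
  rw [Finsupp.lex_def]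
  refine ⟨g, fun j hj => ?_, ?_⟩
  · have heq : T v j = v j := by
      rw [redop_apply_high hT v g hk j (le_of_lt hj)]
      by_cases hjv : j ∈ v.support
      · by_cases hjr : T (Finsupp.single j 1) = Finsupp.single j 1
        · rw [hjr, Finsupp.single_apply, if_pos rfl, mul_one]
        · exact absurd (hk j hjv hjr) (not_le.mpr hj)
      · rw [Finsupp.notMem_support_iff.mp hjv, zero_mul]
    show (ind (T v)) j = (ind v) j
    simp only [ind, Finsupp.mapRange_apply, heq]
  · have hTvg : T v g = 0 := by
      rw [redop_apply_high hT v g hk g le_rfl]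
      have : T (Finsupp.single g 1) g = 0 := by
        rcases hT.2 g with h1 | h1
        · exact absurd h1 hgT
        · by_contra h2
          exact absurd (h1 g (Finsupp.mem_support_iff.mpr h2)) (lt_irrefl g)
      rw [this, mul_zero]
    show ((ind (T v)) g : ℕ) < (ind v) g
    simp only [ind, Finsupp.mapRange_apply, hTvg, if_pos rfl,
      if_neg (Finsupp.mem_support_iff.mp hgv)]
    exact Nat.zero_lt_one

private lemma step_wf [WellFoundedLT G] {F : Set (Module.End K (G →₀ K))}
    (hF : ∀ T ∈ F, IsRedOp T) :
    WellFounded (fun x y : G →₀ K => (∃ T ∈ F, T y = x) ∧ x ≠ y) := by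
  have hlex : WellFounded (Finsupp.Lex ((· > ·) : G → G → Prop) ((· < ·) : ℕ → ℕ → Prop)) := by
    refine Finsupp.Lex.wellFounded' (fun n => Nat.not_lt_zero n) (wellFounded_lt) ?_
    exact (wellFounded_lt : WellFounded ((· < ·) : G → G → Prop))
  refine Subrelation.wf ?_ (InvImage.wf ind hlex)
  rintro x y ⟨⟨T, hTF, rfl⟩, hne⟩
  exact step_dec (hF T hTF) hne

private theorem newman_aux {α : Type*} {r : α → α → Prop}
    (wf : WellFounded (fun x y => r y x))
    (lc : ∀ a b c, r a b → r a c → ∃ d, ReflTransGen r b d ∧ ReflTransGen r c d) :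
    ∀ a b c, ReflTransGen r a b → ReflTransGen r a c →
      ∃ d, ReflTransGen r b d ∧ ReflTransGen r c d := by
  intro a
  induction a using wf.induction with
  | _ a ih =>
    intro b c hab hac
    rcases hab.cases_head with rfl | ⟨b₁, hab₁, hb₁b⟩
    · exact ⟨c, hac, .refl⟩
    rcases hac.cases_head with rfl | ⟨c₁, hac₁, hc₁c⟩
    · exact ⟨b, .refl, hab⟩
    obtain ⟨d, hbd, hcd⟩ := lc a b₁ c₁ hab₁ hac₁
    obtain ⟨e, hbe, hde⟩ := ih b₁ hab₁ b d hb₁b hbd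
    obtain ⟨f, hef, hcf⟩ := ih c₁ hac₁ e c (hcd.trans hde) hc₁c
    exact ⟨f, hbe.trans hef, hcf⟩

private def Step (F : Set (Module.End K (G →₀ K))) (a b : G →₀ K) : Prop := ∃ T ∈ F, T a = b

private lemma closure_rtg {F : Set (Module.End K (G →₀ K))} {R : Module.End K (G →₀ K)}
    (hR : R ∈ Submonoid.closure F) (a : G →₀ K) : ReflTransGen (Step F) a (R a) := by
  refine Submonoid.closure_induction
    (motive := fun x _ => ∀ a : G →₀ K, ReflTransGen (Step F) a (x a)) ?_ ?_ ?_ hR a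
  · intro T hT a
    exact ReflTransGen.single ⟨T, hT, rfl⟩
  · intro a
    exact ReflTransGen.refl
  · intro x y _ _ px py a
    exact (py a).trans (px (y a))

private lemma rtg_zero {F : Set (Module.End K (G →₀ K))} {a : G →₀ K}
    (h : ReflTransGen (Step F) 0 a) : a = 0 := by
  induction h with
  | refl => rfl
  | tail _ h₂ ih =>
    obtain ⟨T, _, hTb⟩ := h₂
    rw [← hTb, ih, map_zero]

private lemma rtg_coeff {F : Set (Module.End K (G →₀ K))} (hF : ∀ T ∈ F, IsRedOp T) {g : G}
    (hg : ∀ T ∈ F, T (Finsupp.single g 1) = Finsupp.single g 1) {a b : G →₀ K}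
    (h : ReflTransGen (Step F) a b) (ha : ∀ k ∈ a.support, k ≤ g) :
    b g = a g ∧ ∀ k ∈ b.support, k ≤ g := by
  induction h with
  | refl => exact ⟨rfl, ha⟩
  | tail h₁ h₂ ih =>
    obtain ⟨T, hT, hTb⟩ := h₂
    rename_i b c
    refine ⟨?_, ?_⟩
    · rw [← hTb, redop_apply_high (hF T hT) b g (fun k hk _ => ih.2 k hk) g le_rfl,
        hg T hT, Finsupp.single_eq_same, mul_one, ih.1]
    · intro k hk
      rw [← hTb] at hk
      obtain ⟨j, hj, hkj⟩ := redop_support_le (hF T hT) b hk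
      exact hkj.trans (ih.2 j hj)

private lemma rewrite_to_W [WellFoundedLT G] {F : Set (Module.End K (G →₀ K))}
    (hF : ∀ T ∈ F, IsRedOp T) {W : Module.End K (G →₀ K)} (hW : IsRedOp W)
    (hker : LinearMap.ker W = ⨆ T ∈ F, LinearMap.ker T)
    (hsub : {g : G | ∀ T ∈ F, T (Finsupp.single g 1) = Finsupp.single g 1} ⊆
        {g : G | W (Finsupp.single g 1) = Finsupp.single g 1}) :
    ∀ v : G →₀ K, ∃ R ∈ Submonoid.closure F, R v = W v := by
  classical
  have hkerle : ∀ T ∈ F, LinearMap.ker T ≤ LinearMap.ker W := fun T hT => by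
    rw [hker]; exact le_iSup₂ (f := fun T (_ : T ∈ F) => LinearMap.ker T) T hT
  suffices h : ∀ b : WithBot G, ∀ v : G →₀ K,
      (v.support.filter fun k => W (Finsupp.single k 1) ≠ Finsupp.single k 1).max = b →
      ∃ R ∈ Submonoid.closure F, R v = W v by
    intro v; exact h _ v rfl
  intro b
  refine WellFounded.induction (wellFounded_lt (α := WithBot G))
    (C := fun b => ∀ v : G →₀ K,
      (v.support.filter fun k => W (Finsupp.single k 1) ≠ Finsupp.single k 1).max = b →
      ∃ R ∈ Submonoid.closure F, R v = W v) b ?_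
  intro b ih v hv
  by_cases hne : (v.support.filter fun k =>
      W (Finsupp.single k 1) ≠ Finsupp.single k 1).Nonempty
  case neg =>
    have hfix : ∀ k ∈ v.support, W (Finsupp.single k 1) = Finsupp.single k 1 := by
      rw [Finset.filter_nonempty_iff] at hne
      push_neg at hne
      exact hne
    exact ⟨1, one_mem _, by rw [redop_fixed hfix]; rfl⟩
  case pos =>
  set s := v.support.filter fun k => W (Finsupp.single k 1) ≠ Finsupp.single k 1 with hs
  set g := s.max' hne with hgdef
  have hbg : b = (g : WithBot G) := by rw [← hv, hgdef, Finset.coe_max']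
  have hgW : W (Finsupp.single g 1) ≠ Finsupp.single g 1 := (Finset.mem_filter.mp (s.max'_mem hne)).2
  have hgv : g ∈ v.support := (Finset.mem_filter.mp (s.max'_mem hne)).1
  have hT : ∃ T ∈ F, T (Finsupp.single g 1) ≠ Finsupp.single g 1 := by
    by_contra hcon
    push_neg at hcon
    exact hgW (hsub hcon)
  obtain ⟨T, hTF, hTg⟩ := hT
  have hTred := hF T hTF
  -- `Red(W) ⊆ Red(T)`
  have hWT : ∀ k : G, W (Finsupp.single k 1) = Finsupp.single k 1 →
      T (Finsupp.single k 1) = Finsupp.single k 1 := by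
    intro k hk
    by_contra hkT
    have hsupp : ∀ g' ∈ (T (Finsupp.single k (1:K))).support, g' < k :=
      (hTred.2 k).resolve_left hkT
    have hu : (Finsupp.single k (1:K) - T (Finsupp.single k 1)) ∈ LinearMap.ker T := by
      rw [LinearMap.mem_ker, map_sub, redop_idem hTred, sub_self]
    have hu' : W (Finsupp.single k (1:K)) = W (T (Finsupp.single k 1)) := by
      have h2 := hkerle T hTF hu
      rw [LinearMap.mem_ker, map_sub, sub_eq_zero] at h2
      exact h2
    have h1 : W (Finsupp.single k (1:K)) k = 1 := by rw [hk, Finsupp.single_eq_same]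
    have h2 : W (T (Finsupp.single k (1:K))) k = 0 := by
      rw [redop_apply_high hW (T (Finsupp.single k 1)) k
        (fun j hj _ => (hsupp j hj).le) k le_rfl]
      have h3 : (T (Finsupp.single k (1:K))) k = 0 := by
        by_contra h3
        exact absurd (hsupp k (Finsupp.mem_support_iff.mpr h3)) (lt_irrefl k)
      rw [h3, zero_mul]
    rw [hu', h2] at h1
    exact one_ne_zero h1.symm
  have hk' : ∀ k ∈ v.support, T (Finsupp.single k 1) ≠ Finsupp.single k 1 → k ≤ g :=
    fun k hkv hkT => s.le_max' k (Finset.mem_filter.mpr ⟨hkv, fun hWk => hkT (hWT k hWk)⟩)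
  have hlt : ∀ h ∈ (T v).support.filter fun k =>
      W (Finsupp.single k 1) ≠ Finsupp.single k 1, h < g := by
    intro h hh
    obtain ⟨hhs, hhW⟩ := Finset.mem_filter.mp hh
    by_contra hcon
    push_neg at hcon
    have happ := redop_apply_high hTred v g hk' h hcon
    have hne0 : T v h ≠ 0 := Finsupp.mem_support_iff.mp hhs
    rw [happ] at hne0
    have hvh : v h ≠ 0 := fun e => hne0 (by rw [e, zero_mul])
    have hTh : T (Finsupp.single h 1) = Finsupp.single h 1 := by
      by_contra hTh
      have hsupp : ∀ g' ∈ (T (Finsupp.single h (1:K))).support, g' < h :=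
        (hTred.2 h).resolve_left hTh
      have : (T (Finsupp.single h (1:K))) h = 0 := by
        by_contra h3
        exact absurd (hsupp h (Finsupp.mem_support_iff.mpr h3)) (lt_irrefl h)
      rw [this, mul_zero] at hne0
      exact hne0 rfl
    have hhg : h ≤ g := s.le_max' h (Finset.mem_filter.mpr ⟨Finsupp.mem_support_iff.mpr hvh, hhW⟩)
    have : h = g := le_antisymm hhg hcon
    exact hTg (this ▸ hTh)
  have hdec : ((T v).support.filter fun k =>
      W (Finsupp.single k 1) ≠ Finsupp.single k 1).max < b := by
    rw [hbg]
    rcases hmax : ((T v).support.filter fun k =>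
        W (Finsupp.single k 1) ≠ Finsupp.single k 1).max with _ | m
    · exact WithBot.bot_lt_coe g
    · exact WithBot.coe_lt_coe.mpr (hlt m (Finset.mem_of_max hmax))
  have hWv : W (T v) = W v := by
    have hm := hkerle T hTF (show (v - T v) ∈ LinearMap.ker T by
      rw [LinearMap.mem_ker, map_sub, redop_idem hTred, sub_self])
    rw [LinearMap.mem_ker, map_sub, sub_eq_zero] at hm
    exact hm.symm
  obtain ⟨R, hR, hRv⟩ := ih _ hdec (T v) rfl
  exact ⟨R * T, mul_mem hR (Submonoid.subset_closure hTF),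
    by rw [Module.End.mul_apply, hRv, hWv]⟩

private lemma confluent_of_local [WellFoundedLT G] {F : Set (Module.End K (G →₀ K))}
    (hF : ∀ T ∈ F, IsRedOp T)
    (hloc : ∀ v : G →₀ K, ∀ T₁ ∈ F, ∀ T₂ ∈ F, ∃ v' : G →₀ K,
        (∃ R₁ ∈ Submonoid.closure F, R₁ (T₁ v) = v') ∧
        (∃ R₂ ∈ Submonoid.closure F, R₂ (T₂ v) = v')) :
    ∀ a b c : G →₀ K, ReflTransGen (Step F) a b → ReflTransGen (Step F) a c →
      ∃ d, ReflTransGen (Step F) b d ∧ ReflTransGen (Step F) c d := by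
  set r₀ : (G →₀ K) → (G →₀ K) → Prop := fun a b => Step F a b ∧ b ≠ a with hr₀
  have hrtg : ∀ a b : G →₀ K, ReflTransGen (Step F) a b ↔ ReflTransGen r₀ a b := by
    intro a b
    constructor
    · intro h
      induction h with
      | refl => exact .refl
      | tail h₁ h₂ ih =>
        rename_i b c
        by_cases hbc : c = b
        · rwa [hbc]
        · exact ih.tail ⟨h₂, hbc⟩
    · intro h
      exact ReflTransGen.mono (fun x y (hxy : r₀ x y) => hxy.1) a b h
  have wf : WellFounded (fun x y => r₀ y x) := step_wf hF
  have lc : ∀ a b c, r₀ a b → r₀ a c → ∃ d, ReflTransGen r₀ b d ∧ ReflTransGen r₀ c d := by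
    rintro a b c ⟨⟨T₁, hT₁, rfl⟩, _⟩ ⟨⟨T₂, hT₂, rfl⟩, _⟩
    obtain ⟨v', ⟨R₁, hR₁, hR₁v⟩, ⟨R₂, hR₂, hR₂v⟩⟩ := hloc a T₁ hT₁ T₂ hT₂
    exact ⟨v', (hrtg _ _).mp (hR₁v ▸ closure_rtg hR₁ (T₁ a)),
      (hrtg _ _).mp (hR₂v ▸ closure_rtg hR₂ (T₂ a))⟩
  intro a b c hab hac
  obtain ⟨d, h1, h2⟩ := newman_aux wf lc a b c ((hrtg _ _).mp hab) ((hrtg _ _).mp hac)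
  exact ⟨d, (hrtg _ _).mpr h1, (hrtg _ _).mpr h2⟩

private lemma ker_rtg_zero [WellFoundedLT G] {F : Set (Module.End K (G →₀ K))}
    (hF : ∀ T ∈ F, IsRedOp T)
    (hloc : ∀ v : G →₀ K, ∀ T₁ ∈ F, ∀ T₂ ∈ F, ∃ v' : G →₀ K,
        (∃ R₁ ∈ Submonoid.closure F, R₁ (T₁ v) = v') ∧
        (∃ R₂ ∈ Submonoid.closure F, R₂ (T₂ v) = v'))
    {u : G →₀ K} (hu : u ∈ ⨆ T ∈ F, LinearMap.ker T) :
    ReflTransGen (Step F) u 0 := by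
  have conf := confluent_of_local hF hloc
  have key : ∀ w ∈ (⨆ T ∈ F, LinearMap.ker T : Submodule K (G →₀ K)), ∀ v : G →₀ K,
      ∃ d, ReflTransGen (Step F) (v + w) d ∧ ReflTransGen (Step F) v d := by
    intro w hw
    rw [iSup_subtype'] at hw
    refine Submodule.iSup_induction (motive := fun w => ∀ v : G →₀ K,
      ∃ d, ReflTransGen (Step F) (v + w) d ∧ ReflTransGen (Step F) v d) _ hw ?_ ?_ ?_
    · rintro ⟨T, hT⟩ x hx v
      refine ⟨T v, ReflTransGen.single ⟨T, hT, ?_⟩, ReflTransGen.single ⟨T, hT, rfl⟩⟩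
      rw [map_add, LinearMap.mem_ker.mp hx, add_zero]
    · intro v
      exact ⟨v, by rw [add_zero], .refl⟩
    · intro x y hx hy v
      obtain ⟨d₁, hd₁, hd₁'⟩ := hx (v + y)
      obtain ⟨d₂, hd₂, hd₂'⟩ := hy v
      obtain ⟨e, he₁, he₂⟩ := conf (v + y) d₁ d₂ hd₁' hd₂
      refine ⟨e, ?_, hd₂'.trans he₂⟩
      have hcomm : v + (x + y) = v + y + x := by rw [add_comm x y, ← add_assoc]
      rw [hcomm]
      exact hd₁.trans he₁
  obtain ⟨d, hd₁, hd₂⟩ := key u hu 0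
  rw [rtg_zero hd₂] at hd₁
  rwa [zero_add] at hd₁

end aux

/-- Newman's Lemma for reduction operators: `F` is confluent iff it is locally
confluent.  Here `W` denotes `∧F`. -/
theorem confluent_iff_locally_confluent {K G : Type*} [Field K] [LinearOrder G]
    [WellFoundedLT G] (F : Set (Module.End K (G →₀ K)))
    (hF : ∀ T ∈ F, IsRedOp T) (W : Module.End K (G →₀ K)) (hW : IsRedOp W)
    (hker : LinearMap.ker W = ⨆ T ∈ F, LinearMap.ker T) :
    ({g : G | ∀ T ∈ F, T (Finsupp.single g 1) = Finsupp.single g 1} ⊆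
        {g : G | W (Finsupp.single g 1) = Finsupp.single g 1}) ↔
      ∀ v : G →₀ K, ∀ T₁ ∈ F, ∀ T₂ ∈ F, ∃ v' : G →₀ K,
        (∃ R₁ ∈ Submonoid.closure F, R₁ (T₁ v) = v') ∧
        (∃ R₂ ∈ Submonoid.closure F, R₂ (T₂ v) = v') := by
  have hkerle : ∀ T ∈ F, LinearMap.ker T ≤ LinearMap.ker W := fun T hT => by
    rw [hker]; exact le_iSup₂ (f := fun T (_ : T ∈ F) => LinearMap.ker T) T hT
  constructor
  · intro hsub v T₁ hT₁ T₂ hT₂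
    have hkey : ∀ T ∈ F, ∃ R ∈ Submonoid.closure F, R (T v) = W v := by
      intro T hT
      obtain ⟨R, hR, hRv⟩ := rewrite_to_W hF hW hker hsub (T v)
      have hWT : W (T v) = W v := by
        have hm := hkerle T hT (show v - T v ∈ LinearMap.ker T by
          rw [LinearMap.mem_ker, map_sub, redop_idem (hF T hT), sub_self])
        rw [LinearMap.mem_ker, map_sub, sub_eq_zero] at hm
        exact hm.symm
      exact ⟨R, hR, by rw [hRv, hWT]⟩
    exact ⟨W v, hkey T₁ hT₁, hkey T₂ hT₂⟩
  · intro hloc g hg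
    simp only [Set.mem_setOf_eq] at hg ⊢
    rcases hW.2 g with h | hsupp
    · exact h
    · exfalso
      have hWg : (W (Finsupp.single g 1)) g = 0 := by
        by_contra h3
        exact absurd (hsupp g (Finsupp.mem_support_iff.mpr h3)) (lt_irrefl g)
      set u := Finsupp.single g (1:K) - W (Finsupp.single g 1) with hu
      have hum : u ∈ ⨆ T ∈ F, LinearMap.ker T := by
        rw [← hker, LinearMap.mem_ker, map_sub, redop_idem hW, sub_self]
      have hrtg0 := ker_rtg_zero hF hloc hum
      have hsuppu : ∀ k ∈ u.support, k ≤ g := by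
        classical
        intro k hk
        rcases Finset.mem_union.mp (Finsupp.support_sub hk) with h1 | h1
        · exact le_of_eq (Finset.mem_singleton.mp (Finsupp.support_single_subset h1))
        · exact (hsupp k h1).le
      have hco := (rtg_coeff hF hg hrtg0 hsuppu).1
      have hug : u g = 1 := by
        rw [hu, Finsupp.sub_apply, Finsupp.single_eq_same, hWg, sub_zero]
      rw [hug] at hco
      have hfin : (1 : K) = 0 := by simpa using hco.symm
      exact one_ne_zero hfin
end

section
/- For all v₁, v₂ ∈ K⟨G⟩, v₁ and v₂ are related by the reflexive transitive symmetric closure of the rewriting relation →_F if and only if v₁ − v₂ ∈ ker(∧F). -/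
/-- The one-step rewriting relation associated with a set `F` of reduction
operators: `v →_F v'` if some `T ∈ F` satisfies `v ∉ K⟨Red(T)⟩` and `v' = T v`. -/
def RedStep {K G : Type*} [Field K] [LinearOrder G]
    (F : Set (Module.End K (G →₀ K))) (v v' : G →₀ K) : Prop :=
  ∃ T ∈ F, v ∉ Submodule.span K
      ((fun g => Finsupp.single g (1 : K)) ''
        {g : G | T (Finsupp.single g 1) = Finsupp.single g 1}) ∧
    v' = T v

/-- `T` acts as the identity on the span of its reduced generators. -/
lemma fixed_on_span {K G : Type*} [Field K] [LinearOrder G]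
    (T : Module.End K (G →₀ K)) {x : G →₀ K}
    (hx : x ∈ Submodule.span K
      ((fun g => Finsupp.single g (1 : K)) ''
        {g : G | T (Finsupp.single g 1) = Finsupp.single g 1})) : T x = x := by
  induction hx using Submodule.span_induction with
  | mem x h => obtain ⟨g, hg, rfl⟩ := h; exact hg
  | zero => simp
  | add x y _ _ hx hy => simp [map_add, hx, hy]
  | smul c x _ hx => simp [map_smul, hx]

/-- Adding an element of `ker T`, `T ∈ F`, stays in the same `↔*_F` class. -/
lemma eqv_add_of_ker {K G : Type*} [Field K] [LinearOrder G]
    (F : Set (Module.End K (G →₀ K))) {T : Module.End K (G →₀ K)} (hT : T ∈ F)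
    {u : G →₀ K} (hu : T u = 0) (v : G →₀ K) :
    Relation.EqvGen (RedStep F) v (v + u) := by
  set S := Submodule.span K
      ((fun g => Finsupp.single g (1 : K)) ''
        {g : G | T (Finsupp.single g 1) = Finsupp.single g 1}) with hS
  by_cases hu0 : u = 0
  · subst hu0; simpa using Relation.EqvGen.refl v
  by_cases hv : v ∈ S
  · have hvu : v + u ∉ S := by
      intro h
      have : u ∈ S := by simpa using Submodule.sub_mem S h hv
      exact hu0 (by rw [← fixed_on_span T this, hu])
    refine Relation.EqvGen.symm _ _ (Relation.EqvGen.rel _ _ ⟨T, hT, hvu, ?_⟩)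
    rw [map_add, hu, fixed_on_span T hv, add_zero]
  · by_cases hvu : v + u ∈ S
    · have h1 : T (v + u) = v + u := fixed_on_span T hvu
      have : T v = v + u := by rw [← h1, map_add, hu, add_zero]
      exact Relation.EqvGen.rel _ _ ⟨T, hT, hv, this.symm⟩
    · refine Relation.EqvGen.trans _ _ _
        (Relation.EqvGen.rel _ _ ⟨T, hT, hv, rfl⟩)
        (Relation.EqvGen.symm _ _ (Relation.EqvGen.rel _ _ ⟨T, hT, hvu, ?_⟩))
      rw [map_add, hu, add_zero]

/-- `v₁ ↔*_F v₂` iff `v₁ - v₂ ∈ ker(∧F)`.  Here `W` denotes `∧F`. -/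
theorem eqvGen_iff_sub_mem_ker {K G : Type*} [Field K] [LinearOrder G]
    [WellFoundedLT G] (F : Set (Module.End K (G →₀ K)))
    (hF : ∀ T ∈ F, IsRedOp T) (W : Module.End K (G →₀ K)) (hW : IsRedOp W)
    (hker : LinearMap.ker W = ⨆ T ∈ F, LinearMap.ker T) (v₁ v₂ : G →₀ K) :
    Relation.EqvGen (RedStep F) v₁ v₂ ↔ v₁ - v₂ ∈ LinearMap.ker W := by
  constructor
  · intro h
    induction h with
    | rel x y hxy =>
      obtain ⟨T, hTF, -, rfl⟩ := hxy
      have hidem : T (T x) = T x := by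
        conv_rhs => rw [← (hF T hTF).1]
        rfl
      have hmem : x - T x ∈ LinearMap.ker T := by
        rw [LinearMap.mem_ker, map_sub, hidem, sub_self]
      rw [hker]
      exact le_iSup₂ (f := fun T (_ : T ∈ F) => LinearMap.ker T) T hTF hmem
    | refl x => simp
    | symm x y _ ih => simpa [neg_sub] using Submodule.neg_mem _ ih
    | trans x y z _ _ ih1 ih2 => simpa using Submodule.add_mem _ ih1 ih2
  · intro h
    rw [hker, iSup_subtype'] at h
    have key : ∀ v, Relation.EqvGen (RedStep F) v (v + (v₁ - v₂)) := by
      refine Submodule.iSup_induction (ι := F)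
        (fun T => LinearMap.ker (T : Module.End K (G →₀ K)))
        (motive := fun x => ∀ v, Relation.EqvGen (RedStep F) v (v + x)) h ?_ ?_ ?_
      · intro T x hx v
        exact eqv_add_of_ker F T.2 (LinearMap.mem_ker.mp hx) v
      · intro v; simpa using Relation.EqvGen.refl v
      · intro x y hx hy v
        have := Relation.EqvGen.trans _ _ _ (hx v) (hy (v + x))
        simpa [add_assoc] using this
    have := key v₂
    rw [add_sub_cancel] at this
    exact Relation.EqvGen.symm _ _ this
end

section
/- Let F be a set of reduction operators relative to a well-ordered set (G,<). The F-complement C^F = (∧F) ∨ (∨F̄), where ∨F̄ is the reduction operator with kernel K⟨Red(F)⟩, is a minimal complement of F: it satisfies (∧F) ∧ C^F = ∧F and the set of non-C^F-reduced generators equals exactly the set of obstructions Obs(F) = Red(F) \ Red(∧F). -/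
/-- A reduction operator maps elements supported in a lower set into the same lower set. -/
lemma redop_supp_subset {K G : Type*} [Field K] [LinearOrder G]
    {T : Module.End K (G →₀ K)} (hT : IsRedOp T) {s : Set G}
    (hs : ∀ a b : G, a ≤ b → b ∈ s → a ∈ s) :
    ∀ x : G →₀ K, (∀ a ∈ x.support, a ∈ s) → ∀ a ∈ (T x).support, a ∈ s := by
  intro x
  induction x using Finsupp.induction with
  | zero => intro _ a ha; simp at ha
  | single_add b k f hbf hk ih =>
    intro hx a ha
    have hbmem : b ∈ s := by
      refine hx b ?_
      rw [Finsupp.mem_support_iff, Finsupp.add_apply, Finsupp.single_eq_same,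
        Finsupp.notMem_support_iff.mp hbf, add_zero]
      exact hk
    rw [map_add] at ha
    rcases Finset.mem_union.mp (Finsupp.support_add ha) with h1 | h2
    · have hk1 : T (Finsupp.single b k) = k • T (Finsupp.single b 1) := by
        rw [← map_smul, Finsupp.smul_single, smul_eq_mul, mul_one]
      rw [hk1] at h1
      have h1' : a ∈ (T (Finsupp.single b 1)).support := Finsupp.support_smul h1
      rcases hT.2 b with he | hlt
      · rw [he, Finsupp.support_single_ne_zero _ one_ne_zero] at h1'
        rw [Finset.mem_singleton.mp h1']
        exact hbmem
      · exact hs a b (le_of_lt (hlt a h1')) hbmem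
    · refine ih (fun c hc => hx c ?_) a h2
      have hcb : c ≠ b := fun hcb => hbf (hcb ▸ hc)
      rw [Finsupp.mem_support_iff, Finsupp.add_apply, Finsupp.single_eq_of_ne hcb,
        zero_add]
      exact Finsupp.mem_support_iff.mp hc

/-- `e_g - T e_g` lies in the kernel of an idempotent `T`. -/
lemma redop_sub_mem_ker {K G : Type*} [Field K] [LinearOrder G]
    {T : Module.End K (G →₀ K)} (hT : IsRedOp T) (x : G →₀ K) :
    x - T x ∈ LinearMap.ker T := by
  have := LinearMap.congr_fun hT.1 x
  rw [LinearMap.comp_apply] at this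
  rw [LinearMap.mem_ker, map_sub, this, sub_self]


/-- The `F`-complement `C^F = (∧F) ∨ (∨F̄)` is a minimal complement of `F`:
it is greater or equal to `∧F` (i.e. `(∧F) ∧ C^F = ∧F`, which via the kernel
bijection means `ker W ⊔ ker C^F = ker W`) and its set of non-reduced
generators is exactly `Obs(F) = Red(F) \ Red(∧F)`.  Here `W = ∧F`, `Vbar = ∨F̄`
is the reduction operator with kernel `K⟨Red(F)⟩`, and `CF` is the reduction
operator with kernel `ker W ⊓ ker Vbar`. -/
theorem F_complement_minimal {K G : Type*} [Field K] [LinearOrder G]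
    [WellFoundedLT G] (F : Set (Module.End K (G →₀ K)))
    (hF : ∀ T ∈ F, IsRedOp T) (W Vbar CF : Module.End K (G →₀ K))
    (hW : IsRedOp W) (hVbar : IsRedOp Vbar) (hCF : IsRedOp CF)
    (hkerW : LinearMap.ker W = ⨆ T ∈ F, LinearMap.ker T)
    (hkerVbar : LinearMap.ker Vbar = Submodule.span K
      ((fun g => Finsupp.single g (1 : K)) ''
        {g : G | ∀ T ∈ F, T (Finsupp.single g 1) = Finsupp.single g 1}))
    (hkerCF : LinearMap.ker CF = LinearMap.ker W ⊓ LinearMap.ker Vbar) :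
    LinearMap.ker W ⊔ LinearMap.ker CF = LinearMap.ker W ∧
      {g : G | CF (Finsupp.single g 1) ≠ Finsupp.single g 1} =
        {g : G | ∀ T ∈ F, T (Finsupp.single g 1) = Finsupp.single g 1} \
          {g : G | W (Finsupp.single g 1) = Finsupp.single g 1} := by
  classical
  have hKer : LinearMap.ker CF ≤ LinearMap.ker W := by rw [hkerCF]; exact inf_le_left
  refine ⟨sup_eq_left.mpr hKer, ?_⟩
  set RedF : Set G := {g : G | ∀ T ∈ F, T (Finsupp.single g 1) = Finsupp.single g 1} with hRedF
  have hspan : LinearMap.ker Vbar = Finsupp.supported K K RedF := by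
    rw [hkerVbar, Finsupp.supported_eq_span_single]
  have hIio : ∀ g : G, ∀ a b : G, a ≤ b → b ∈ Set.Iio g → a ∈ Set.Iio g :=
    fun g a b hab hb => lt_of_le_of_lt hab hb
  ext g
  simp only [Set.mem_setOf_eq, Set.mem_diff]
  constructor
  · -- g non-CF-reduced → g ∈ RedF \ Red(W)
    intro hg
    have hsupCF : ∀ a ∈ (CF (Finsupp.single g 1)).support, a < g := by
      rcases hCF.2 g with h | h
      · exact absurd h hg
      · exact h
    have hCFg0 : (CF (Finsupp.single g 1)) g = 0 := by
      by_contra h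
      exact lt_irrefl g (hsupCF g (Finsupp.mem_support_iff.mpr h))
    set v : G →₀ K := Finsupp.single g 1 - CF (Finsupp.single g 1) with hv
    have hvker : v ∈ LinearMap.ker CF := redop_sub_mem_ker hCF _
    have hvg : v g = 1 := by
      rw [hv, Finsupp.sub_apply, Finsupp.single_eq_same, hCFg0, sub_zero]
    have hvV : v ∈ LinearMap.ker Vbar := by
      rw [hkerCF] at hvker; exact hvker.2
    have hvsupp : ↑v.support ⊆ RedF := by
      rw [hspan] at hvV
      exact Finsupp.mem_supported K v |>.mp hvV
    constructor
    · exact hvsupp (Finsupp.mem_support_iff.mpr (hvg ▸ one_ne_zero))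
    · -- W e_g ≠ e_g
      intro hWg
      have hvW : v ∈ LinearMap.ker W := by rw [hkerCF] at hvker; exact hvker.1
      have : (W v) g = 1 := by
        rw [hv, map_sub, hWg, Finsupp.sub_apply, Finsupp.single_eq_same]
        have : ∀ a ∈ (W (CF (Finsupp.single g 1))).support, a ∈ Set.Iio g :=
          redop_supp_subset hW (hIio g) _ (fun a ha => hsupCF a ha)
        have h0 : (W (CF (Finsupp.single g 1))) g = 0 := by
          by_contra h
          exact lt_irrefl g (this g (Finsupp.mem_support_iff.mpr h))
        rw [h0, sub_zero]
      rw [LinearMap.mem_ker.mp hvW] at this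
      simp at this
  · -- g ∈ RedF \ Red(W) → g non-CF-reduced
    rintro ⟨hgRed, hgW⟩
    -- key: produce v' ∈ ker W with support ⊆ RedF, v' g = 1, support ≤ g
    have key : ∀ h : G, ∀ v : G →₀ K, v ∈ LinearMap.ker W → v g = 1 →
        (∀ a ∈ v.support, a ≤ g) → (∀ a ∈ v.support, a ∉ RedF → a ≤ h) →
        ∃ v' : G →₀ K, v' ∈ LinearMap.ker W ∧ (↑v'.support ⊆ RedF) ∧ v' g = 1 ∧
          (∀ a ∈ v'.support, a ≤ g) := by
      intro h
      induction h using WellFoundedLT.induction with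
      | ind h ih =>
        intro v hv hvg hvle hbad
        by_cases hgood : ↑v.support ⊆ RedF
        · exact ⟨v, hv, hgood, hvg, hvle⟩
        · set Bad : Finset G := v.support.filter (fun a => a ∉ RedF) with hBad
          have hne : Bad.Nonempty := by
            obtain ⟨b, hb1, hb2⟩ := Set.not_subset.mp hgood
            exact ⟨b, Finset.mem_filter.mpr ⟨hb1, hb2⟩⟩
          set h0 : G := Bad.max' hne with hh0
          have hh0mem := Finset.mem_filter.mp (Bad.max'_mem hne)
          have hh0sup : h0 ∈ v.support := hh0mem.1
          have hh0bad : h0 ∉ RedF := hh0mem.2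
          have hh0max : ∀ a ∈ v.support, a ∉ RedF → a ≤ h0 :=
            fun a ha hab => Bad.le_max' a (Finset.mem_filter.mpr ⟨ha, hab⟩)
          have hh0g : h0 < g := lt_of_le_of_ne (hvle h0 hh0sup)
            (fun he => hh0bad (he ▸ hgRed))
          -- find T ∈ F with T e_{h0} ≠ e_{h0}
          obtain ⟨T, hTF, hTne⟩ : ∃ T ∈ F, T (Finsupp.single h0 1) ≠ Finsupp.single h0 1 := by
            by_contra hcon
            push_neg at hcon
            exact hh0bad hcon
          have hT := hF T hTF
          have hTsup : ∀ a ∈ (T (Finsupp.single h0 1)).support, a < h0 := by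
            rcases hT.2 h0 with he | hlt
            · exact absurd he hTne
            · exact hlt
          have hTh0 : (T (Finsupp.single h0 1)) h0 = 0 := by
            by_contra hc
            exact lt_irrefl h0 (hTsup h0 (Finsupp.mem_support_iff.mpr hc))
          set w : G →₀ K := Finsupp.single h0 1 - T (Finsupp.single h0 1) with hw
          have hwker : w ∈ LinearMap.ker W := by
            have h1 : w ∈ LinearMap.ker T := redop_sub_mem_ker hT _
            have h2 : LinearMap.ker T ≤ LinearMap.ker W := by
              rw [hkerW]
              exact le_iSup₂ (f := fun T (_ : T ∈ F) => LinearMap.ker T) T hTF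
            exact h2 h1
          have hwle : ∀ a ∈ w.support, a ≤ h0 := by
            intro a ha
            rcases Finset.mem_union.mp (Finsupp.support_sub ha) with h1 | h1
            · rw [Finsupp.support_single_ne_zero _ one_ne_zero] at h1
              exact le_of_eq (Finset.mem_singleton.mp h1)
            · exact le_of_lt (hTsup a h1)
          have hwh0 : w h0 = 1 := by
            rw [hw, Finsupp.sub_apply, Finsupp.single_eq_same, hTh0, sub_zero]
          set v2 : G →₀ K := v - v h0 • w with hv2
          have hv2ker : v2 ∈ LinearMap.ker W :=
            Submodule.sub_mem _ hv (Submodule.smul_mem _ _ hwker)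
          have hwg : w g = 0 := by
            by_contra hc
            exact absurd (hwle g (Finsupp.mem_support_iff.mpr hc)) (not_le.mpr hh0g)
          have hv2g : v2 g = 1 := by
            rw [hv2, Finsupp.sub_apply, Finsupp.smul_apply, hwg, smul_zero, sub_zero, hvg]
          have hv2h0 : v2 h0 = 0 := by
            rw [hv2, Finsupp.sub_apply, Finsupp.smul_apply, hwh0, smul_eq_mul, mul_one, sub_self]
          have hv2supp : ∀ a ∈ v2.support, a ∈ v.support ∨ a ∈ w.support := by
            intro a ha
            rcases Finset.mem_union.mp (Finsupp.support_sub ha) with h1 | h1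
            · exact Or.inl h1
            · exact Or.inr (Finsupp.support_smul h1)
          have hv2le : ∀ a ∈ v2.support, a ≤ g := by
            intro a ha
            rcases hv2supp a ha with h1 | h1
            · exact hvle a h1
            · exact le_of_lt (lt_of_le_of_lt (hwle a h1) hh0g)
          have hv2bad : ∀ a ∈ v2.support, a ∉ RedF → a < h0 := by
            intro a ha hab
            have hane : a ≠ h0 := by
              intro he
              exact Finsupp.mem_support_iff.mp ha (he ▸ hv2h0)
            rcases hv2supp a ha with h1 | h1
            · exact lt_of_le_of_ne (hh0max a h1 hab) hane
            · exact lt_of_le_of_ne (hwle a h1) hane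
          by_cases hg2 : ↑v2.support ⊆ RedF
          · exact ⟨v2, hv2ker, hg2, hv2g, hv2le⟩
          · set Bad2 : Finset G := v2.support.filter (fun a => a ∉ RedF) with hBad2
            have hne2 : Bad2.Nonempty := by
              obtain ⟨b, hb1, hb2⟩ := Set.not_subset.mp hg2
              exact ⟨b, Finset.mem_filter.mpr ⟨hb1, hb2⟩⟩
            set h1 : G := Bad2.max' hne2 with hh1
            have hh1mem := Finset.mem_filter.mp (Bad2.max'_mem hne2)
            have hh1lt : h1 < h0 := hv2bad h1 hh1mem.1 hh1mem.2
            exact ih h1 (lt_of_lt_of_le hh1lt (hbad h0 hh0sup hh0bad)) v2 hv2ker hv2g hv2le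
              (fun a ha hab => Bad2.le_max' a (Finset.mem_filter.mpr ⟨ha, hab⟩))
    -- apply key with h = g, v = e_g - W e_g
    have hWsup : ∀ a ∈ (W (Finsupp.single g 1)).support, a < g := by
      rcases hW.2 g with he | hlt
      · exact absurd he hgW
      · exact hlt
    have hWg0 : (W (Finsupp.single g 1)) g = 0 := by
      by_contra hc
      exact lt_irrefl g (hWsup g (Finsupp.mem_support_iff.mpr hc))
    set v0 : G →₀ K := Finsupp.single g 1 - W (Finsupp.single g 1) with hv0
    have hv0ker : v0 ∈ LinearMap.ker W := redop_sub_mem_ker hW _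
    have hv0g : v0 g = 1 := by
      rw [hv0, Finsupp.sub_apply, Finsupp.single_eq_same, hWg0, sub_zero]
    have hv0le : ∀ a ∈ v0.support, a ≤ g := by
      intro a ha
      rcases Finset.mem_union.mp (Finsupp.support_sub ha) with h1 | h1
      · rw [Finsupp.support_single_ne_zero _ one_ne_zero] at h1
        exact le_of_eq (Finset.mem_singleton.mp h1)
      · exact le_of_lt (hWsup a h1)
    obtain ⟨v', hv'W, hv'supp, hv'g, hv'le⟩ :=
      key g v0 hv0ker hv0g hv0le (fun a ha _ => hv0le a ha)
    have hv'CF : v' ∈ LinearMap.ker CF := by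
      rw [hkerCF]
      exact ⟨hv'W, by rw [hspan]; exact (Finsupp.mem_supported K v').mpr hv'supp⟩
    -- conclude CF e_g ≠ e_g
    intro hc
    set u : G →₀ K := v' - Finsupp.single g 1 with hu
    have hule : ∀ a ∈ u.support, a < g := by
      intro a ha
      have hne : a ≠ g := by
        intro he
        apply Finsupp.mem_support_iff.mp ha
        rw [hu, he, Finsupp.sub_apply, Finsupp.single_eq_same, hv'g, sub_self]
      rcases Finset.mem_union.mp (Finsupp.support_sub ha) with h1 | h1
      · exact lt_of_le_of_ne (hv'le a h1) hne
      · rw [Finsupp.support_single_ne_zero _ one_ne_zero] at h1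
        exact absurd (Finset.mem_singleton.mp h1) hne
    have hCFu : (CF u) g = 0 := by
      have : ∀ a ∈ (CF u).support, a ∈ Set.Iio g :=
        redop_supp_subset hCF (hIio g) u (fun a ha => hule a ha)
      by_contra hcc
      exact lt_irrefl g (this g (Finsupp.mem_support_iff.mpr hcc))
    have : (CF v') g = 1 := by
      have hsplit : v' = u + Finsupp.single g 1 := by rw [hu, sub_add_cancel]
      rw [hsplit, map_add, hc, Finsupp.add_apply, hCFu, Finsupp.single_eq_same, zero_add]
    rw [LinearMap.mem_ker.mp hv'CF] at this
    simp at this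
end
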